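/- arXiv:0905.0195 — 11 statements merged into one kernel-verified Lean document; each statement's English description precedes it below -/
import Mathlib

section
/- For integers v ≥ 1 and 1 ≤ t ≤ k, the rank over ℝ of the t-inclusion matrix M_t(v,k) equals ∑_{i=0}^{t} C(k,i)·(v−1)^i. -/
/-- The `t`-inclusion matrix `M_t(v,k)`: columns are indexed by `k`-tuples
`x : Fin k → Fin v`; rows are indexed by pairs `(I, u)` where `I` is a
`t`-element subset of `Fin k` and `u : Fin k → Fin v` is considered only
through its values on `I`.  The entry in row `(I,u)` and column `x` is `1`
if `x i = u i` for every `i ∈ I`, and `0` otherwise. -/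
def inclusionMatrix (v k t : ℕ) :
    Matrix ({I : Finset (Fin k) // I.card = t} × (Fin k → Fin v))
      (Fin k → Fin v) ℝ :=
  fun r x => if ∀ i ∈ r.1.1, x i = r.2 i then 1 else 0

namespace RankIncl

open Finset Matrix Module Submodule Function

variable (n k t : ℕ)

/-- base matrix: row `0` is all ones, row `s ≠ 0` is the standard basis vector `e s`. -/
def A : Matrix (Fin (n+1)) (Fin (n+1)) ℝ :=
  fun s x => if s = 0 then 1 else if x = s then 1 else 0

def B : Matrix (Fin (n+1)) (Fin (n+1)) ℝ :=
  fun s x => if s = 0 then (if x = 0 then 1 else -1) else if x = s then 1 else 0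

lemma A_mul_B : A n * B n = 1 := by
  ext s y
  rw [Matrix.mul_apply, Matrix.one_apply]
  rcases eq_or_ne s 0 with rfl | hs
  · simp only [A, if_pos rfl, one_mul]
    rw [Fin.sum_univ_succ]
    have h0 : B n 0 y = if y = 0 then 1 else -1 := by simp [B]
    have hsucc : ∀ i : Fin n, B n i.succ y = if y = i.succ then 1 else 0 := by
      intro i; simp [B, (Fin.succ_ne_zero i)]
    rw [h0]
    simp only [hsucc]
    rcases eq_or_ne y 0 with rfl | hy
    · simp [Fin.succ_ne_zero, eq_comm (a := (0 : Fin (n+1)))]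
    · obtain ⟨j, rfl⟩ := Fin.exists_succ_eq_of_ne_zero hy
      have : ∀ i : Fin n, (if j.succ = i.succ then (1:ℝ) else 0) = if i = j then 1 else 0 := by
        intro i
        simp [Fin.succ_inj, eq_comm]
      simp only [this]
      simp [hy, (Fin.succ_ne_zero j).symm, eq_comm]
  · have : ∀ x, A n s x * B n x y = if x = s then B n x y else 0 := by
      intro x; simp only [A, if_neg hs]
      split <;> simp
    simp only [this, Finset.sum_ite_eq' Finset.univ s (fun x => B n x y), Finset.mem_univ, if_pos]
    simp only [B, if_neg hs]
    by_cases h : y = s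
    · simp [h]
    · rw [if_neg h, if_neg (Ne.symm h)]

/-- tensor power of `A`. -/
def F : Matrix (Fin k → Fin (n+1)) (Fin k → Fin (n+1)) ℝ :=
  fun y x => ∏ i, A n (y i) (x i)

def G : Matrix (Fin k → Fin (n+1)) (Fin k → Fin (n+1)) ℝ :=
  fun y x => ∏ i, B n (y i) (x i)

lemma F_mul_G : F n k * G n k = 1 := by
  ext y z
  rw [Matrix.mul_apply, Matrix.one_apply]
  have h1 : ∀ x, F n k y x * G n k x z = ∏ i, A n (y i) (x i) * B n (x i) (z i) := by
    intro x; rw [F, G, ← Finset.prod_mul_distrib]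
  simp only [h1]
  rw [← Fintype.prod_sum (fun i w => A n (y i) w * B n w (z i))]
  have h2 : ∀ i, (∑ w, A n (y i) w * B n w (z i)) = if y i = z i then 1 else 0 := by
    intro i
    have := congrFun (congrFun (A_mul_B n) (y i)) (z i)
    rw [Matrix.mul_apply, Matrix.one_apply] at this
    exact this
  simp only [h2]
  rw [Finset.prod_boole]
  by_cases h : y = z
  · subst h; simp
  · rw [if_neg h, if_neg]
    intro hall
    exact h (funext fun i => hall i (Finset.mem_univ i))

noncomputable instance : Invertible (F n k) := invertibleOfRightInverse _ _ (F_mul_G n k)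

/-- indicator row function of a subcube. -/
def rrow (S : Finset (Fin k)) (u : Fin k → Fin (n+1)) : (Fin k → Fin (n+1)) → ℝ :=
  fun x => if ∀ i ∈ S, x i = u i then 1 else 0

/-- support of a tuple -/
def supp (y : Fin k → Fin (n+1)) : Finset (Fin k) :=
  Finset.univ.filter (fun i => y i ≠ 0)

lemma F_eq_rrow (y : Fin k → Fin (n+1)) : F n k y = rrow n k (supp n k y) y := by
  funext x
  show (∏ i, A n (y i) (x i)) = if ∀ i ∈ supp n k y, x i = y i then 1 else 0
  by_cases h : ∀ i ∈ supp n k y, x i = y i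
  · rw [if_pos h]
    apply Finset.prod_eq_one
    intro i _
    by_cases h0 : y i = 0
    · simp [A, h0]
    · have hx : x i = y i := h i (by simp [supp, h0])
      simp [A, h0, hx]
  · rw [if_neg h]
    push_neg at h
    obtain ⟨i, hi, hxi⟩ := h
    refine Finset.prod_eq_zero (Finset.mem_univ i) ?_
    have h0 : y i ≠ 0 := by simpa [supp] using hi
    simp [A, h0, hxi]

lemma rrow_split {S : Finset (Fin k)} {j : Fin k} (hj : j ∉ S) (u : Fin k → Fin (n+1)) :
    rrow n k S u = ∑ b : Fin (n+1), rrow n k (insert j S) (Function.update u j b) := by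
  funext x
  rw [Finset.sum_apply]
  have key : ∀ b : Fin (n+1),
      rrow n k (insert j S) (Function.update u j b) x
        = if x j = b then (if ∀ i ∈ S, x i = u i then (1:ℝ) else 0) else 0 := by
    intro b
    rw [← ite_and, rrow]
    congr 1
    simp only [eq_iff_iff, Finset.mem_insert]
    constructor
    · intro h
      refine ⟨by simpa using h j (Or.inl rfl), fun i hi => ?_⟩
      have hij : i ≠ j := fun h' => hj (h' ▸ hi)
      simpa [Function.update_of_ne hij] using h i (Or.inr hi)
    · rintro ⟨h1, h2⟩ i hi
      rcases hi with rfl | hi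
      · simpa using h1
      · have hij : i ≠ j := fun h' => hj (h' ▸ hi)
        simpa [Function.update_of_ne hij] using h2 i hi
  simp only [key]
  rw [Finset.sum_ite_eq Finset.univ (x j)]
  simp [rrow]

lemma rrow_zero_split {S : Finset (Fin k)} {j : Fin k} (hj : j ∈ S)
    {u : Fin k → Fin (n+1)} (hu : u j = 0) :
    rrow n k S u = rrow n k (S.erase j) u
      - ∑ b ∈ Finset.univ.erase (0 : Fin (n+1)), rrow n k S (Function.update u j b) := by
  have h1 := rrow_split n k (Finset.notMem_erase j S) u
  rw [Finset.insert_erase hj] at h1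
  rw [h1, ← Finset.add_sum_erase _ _ (Finset.mem_univ (0 : Fin (n+1)))]
  have : Function.update u j 0 = u := by
    rw [← hu]; exact Function.update_eq_self j u
  rw [this]
  abel

section main

variable (ht : 1 ≤ t) (htk : t ≤ k)

/-- row span of the inclusion matrix -/
def W : Submodule ℝ ((Fin k → Fin (n+1)) → ℝ) :=
  Submodule.span ℝ (Set.range (inclusionMatrix (n+1) k t))

lemma row_eq (S : Finset (Fin k)) (hS : S.card = t) (u : Fin k → Fin (n+1)) :
    inclusionMatrix (n+1) k t (⟨S, hS⟩, u) = rrow n k S u := rfl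

include htk in
lemma mem_W_aux (m : ℕ) : ∀ (S : Finset (Fin k)) (u : Fin k → Fin (n+1)),
    S.card + m = t → rrow n k S u ∈ W n k t := by
  induction m with
  | zero =>
      intro S u h
      exact Submodule.subset_span ⟨(⟨S, by omega⟩, u), rfl⟩
  | succ m ih =>
      intro S u h
      have hcard : S.card < k := by omega
      have : ∃ j, j ∉ S := by
        by_contra hc
        push_neg at hc
        have : S = Finset.univ := Finset.eq_univ_iff_forall.2 hc
        rw [this, Finset.card_univ, Fintype.card_fin] at hcard
        omega
      obtain ⟨j, hj⟩ := this
      rw [rrow_split n k hj u]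
      exact Submodule.sum_mem _ fun b _ => ih (insert j S) (Function.update u j b)
        (by rw [Finset.card_insert_of_notMem hj]; omega)

include htk in
lemma mem_W {S : Finset (Fin k)} (hS : S.card ≤ t) (u : Fin k → Fin (n+1)) :
    rrow n k S u ∈ W n k t :=
  mem_W_aux n k t htk (t - S.card) S u (by omega)

/-- the family of independent rows indexed by small-support tuples -/
def bfam (y : {y : Fin k → Fin (n+1) // (supp n k y).card ≤ t}) : (Fin k → Fin (n+1)) → ℝ :=
  F n k y.1

def W' : Submodule ℝ ((Fin k → Fin (n+1)) → ℝ) :=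
  Submodule.span ℝ (Set.range (bfam n k t))

lemma mem_W'_aux (z : ℕ) : ∀ (S : Finset (Fin k)) (u : Fin k → Fin (n+1)),
    S.card ≤ t → (S.filter (fun i => u i = 0)).card = z → rrow n k S u ∈ W' n k t := by
  induction z with
  | zero =>
      intro S u hS hz
      rw [Finset.card_eq_zero, Finset.filter_eq_empty_iff] at hz
      set y : Fin k → Fin (n+1) := fun i => if i ∈ S then u i else 0 with hy
      have hsupp : supp n k y = S := by
        ext i
        simp only [supp, Finset.mem_filter, Finset.mem_univ, true_and, hy]
        by_cases h : i ∈ S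
        · simp [h, hz h]
        · simp [h]
      have hy' : (supp n k y).card ≤ t := by rw [hsupp]; exact hS
      have hF : bfam n k t ⟨y, hy'⟩ = rrow n k S y := by
        show F n k y = rrow n k S y
        rw [F_eq_rrow, hsupp]
      have heq : rrow n k S y = rrow n k S u := by
        funext x
        show (if ∀ i ∈ S, x i = y i then (1:ℝ) else 0) = if ∀ i ∈ S, x i = u i then 1 else 0
        congr 1
        simp only [eq_iff_iff]
        constructor <;> intro h i hi <;> have := h i hi <;> simpa [hy, hi] using this
      exact Submodule.subset_span ⟨⟨y, hy'⟩, by rw [hF, heq]⟩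
  | succ z ih =>
      intro S u hS hz
      have hne : (S.filter (fun i => u i = 0)).Nonempty := by
        rw [← Finset.card_pos, hz]; omega
      obtain ⟨j, hjmem⟩ := hne
      rw [Finset.mem_filter] at hjmem
      obtain ⟨hjS, hju⟩ := hjmem
      rw [rrow_zero_split n k hjS hju]
      refine Submodule.sub_mem _ ?_ (Submodule.sum_mem _ fun b hb => ?_)
      · refine ih (S.erase j) u (le_trans (Finset.card_le_card (Finset.erase_subset j S)) hS) ?_
        have : (S.erase j).filter (fun i => u i = 0)
            = (S.filter (fun i => u i = 0)).erase j := by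
          ext i; simp only [Finset.mem_filter, Finset.mem_erase]; tauto
        rw [this, Finset.card_erase_of_mem (by simp [hjS, hju]), hz]
        omega
      · have hb0 : b ≠ 0 := (Finset.mem_erase.1 hb).1
        refine ih S (Function.update u j b) hS ?_
        have : S.filter (fun i => Function.update u j b i = 0)
            = (S.filter (fun i => u i = 0)).erase j := by
          ext i
          simp only [Finset.mem_filter, Finset.mem_erase]
          rcases eq_or_ne i j with rfl | hij
          · simp [Function.update_self, hb0]
          · simp [Function.update_of_ne hij, hij]
        rw [this, Finset.card_erase_of_mem (by simp [hjS, hju]), hz]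
        omega

include htk in
lemma W_eq_W' : W n k t = W' n k t := by
  apply le_antisymm
  · rw [W, Submodule.span_le]
    rintro _ ⟨⟨⟨S, hS⟩, u⟩, rfl⟩
    rw [row_eq]
    exact mem_W'_aux n k t _ S u hS.le rfl
  · rw [W', Submodule.span_le]
    rintro _ ⟨y, rfl⟩
    rw [bfam, F_eq_rrow]
    exact mem_W n k t htk y.2 y.1

lemma bfam_li : LinearIndependent ℝ (bfam n k t) :=
  (Matrix.linearIndependent_rows_of_invertible (F n k)).comp _ Subtype.val_injective

lemma card_supp_eq (S : Finset (Fin k)) :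
    (Finset.univ.filter (fun y : Fin k → Fin (n+1) => supp n k y = S)).card = n ^ S.card := by
  have hset : Finset.univ.filter (fun y : Fin k → Fin (n+1) => supp n k y = S)
      = Fintype.piFinset (fun i => if i ∈ S then Finset.univ.erase (0 : Fin (n+1)) else {0}) := by
    ext y
    simp only [Finset.mem_filter, Finset.mem_univ, true_and, Fintype.mem_piFinset]
    constructor
    · intro h i
      by_cases hi : i ∈ S
      · have : y i ≠ 0 := by
          rw [← h] at hi; exact (Finset.mem_filter.1 hi).2
        simp [hi, this]
      · have : ¬ y i ≠ 0 := by
          rw [← h] at hi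
          intro hc; exact hi (Finset.mem_filter.2 ⟨Finset.mem_univ i, hc⟩)
        push_neg at this
        simp [hi, this]
    · intro h
      ext i
      simp only [supp, Finset.mem_filter, Finset.mem_univ, true_and]
      have := h i
      by_cases hi : i ∈ S
      · simp only [if_pos hi, Finset.mem_erase, Finset.mem_univ, and_true] at this
        simp [hi, this]
      · simp only [if_neg hi, Finset.mem_singleton] at this
        simp [hi, this]
  rw [hset, Fintype.card_piFinset]
  have : ∀ i, ((if i ∈ S then Finset.univ.erase (0 : Fin (n+1)) else {0}).card)
      = if i ∈ S then n else 1 := by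
    intro i
    by_cases hi : i ∈ S <;>
      simp [hi, Finset.card_erase_of_mem, Finset.card_univ]
  simp only [this]
  rw [← Finset.prod_filter, Finset.filter_mem_eq_inter, Finset.univ_inter, Finset.prod_const]

lemma card_T : Fintype.card {y : Fin k → Fin (n+1) // (supp n k y).card ≤ t}
    = ∑ i ∈ Finset.range (t + 1), k.choose i * n ^ i := by
  rw [Fintype.card_subtype]
  rw [Finset.card_eq_sum_card_fiberwise
    (f := supp n k) (t := (Finset.univ : Finset (Finset (Fin k))).filter (fun S => S.card ≤ t))
    (fun y hy => by
      simp only [Finset.mem_coe, Finset.mem_filter, Finset.mem_univ, true_and] at hy ⊢; exact hy)]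
  have h1 : ∀ S ∈ (Finset.univ : Finset (Finset (Fin k))).filter (fun S => S.card ≤ t),
      ((Finset.univ.filter (fun y : Fin k → Fin (n+1) => (supp n k y).card ≤ t)).filter
        (fun y => supp n k y = S)).card = n ^ S.card := by
    intro S hS
    rw [Finset.mem_filter] at hS
    rw [Finset.filter_filter]
    have : ∀ y : Fin k → Fin (n+1),
        ((supp n k y).card ≤ t ∧ supp n k y = S) ↔ supp n k y = S := by
      intro y
      constructor
      · exact fun h => h.2
      · intro h; exact ⟨by rw [h]; exact hS.2, h⟩
    simp only [this]
    exact card_supp_eq n k S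
  rw [Finset.sum_congr rfl h1]
  rw [← Finset.sum_fiberwise_of_maps_to'
    (g := Finset.card) (t := Finset.range (t+1))
    (fun S hS => by
      simp only [Finset.mem_filter] at hS
      simp only [Finset.mem_range]
      omega)
    (fun i => n ^ i)]
  refine Finset.sum_congr rfl fun i hi => ?_
  rw [Finset.mem_range] at hi
  rw [Finset.sum_const, Finset.filter_filter]
  have : ((Finset.univ : Finset (Finset (Fin k))).filter
      (fun S => S.card ≤ t ∧ S.card = i)) = Finset.powersetCard i Finset.univ := by
    rw [Finset.powersetCard_eq_filter, Finset.powerset_univ]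
    refine Finset.filter_congr fun S _ => ?_
    constructor
    · exact fun h => h.2
    · intro h; exact ⟨by omega, h⟩
  rw [this, Finset.card_powersetCard, Finset.card_univ, Fintype.card_fin, smul_eq_mul]

include htk in
lemma rank_aux : (inclusionMatrix (n+1) k t).rank
    = ∑ i ∈ Finset.range (t + 1), k.choose i * n ^ i := by
  rw [Matrix.rank_eq_finrank_span_row]
  have : Submodule.span ℝ (Set.range (inclusionMatrix (n+1) k t)) = W' n k t := by
    rw [← W_eq_W' n k t htk]; rfl
  rw [Matrix.row, this, W', finrank_span_eq_card (bfam_li n k t), card_T]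

end main

end RankIncl

theorem rank_inclusionMatrix (v t k : ℕ) (hv : 1 ≤ v) (ht : 1 ≤ t) (htk : t ≤ k) :
    (inclusionMatrix v k t).rank =
      ∑ i ∈ Finset.range (t + 1), k.choose i * (v - 1) ^ i := by
  obtain ⟨n, rfl⟩ : ∃ n, v = n + 1 := ⟨v - 1, by omega⟩
  simp only [Nat.add_sub_cancel]
  exact RankIncl.rank_aux n k t htk
end

section
/- Let 1 ≤ t ≤ k and v ≥ 1, and let x ∈ V^k satisfy L_x ≤ t. Then there exists a row index (I,u) of the t-inclusion matrix M_t(v,k) such that the entry of M_t(v,k) in row (I,u) and column x equals 1, while the entry in row (I,u) and column y equals 0 for every y ∈ V^k with y ≺ x in the lexicographic order (i.e., the first 1 of that row lies in column x). -/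
/-- `L x` is the number of coordinates of `x` that are nonzero. -/
def Lwt {v k : ℕ} (x : Fin k → Fin v) : ℕ :=
  (Finset.univ.filter fun i => (x i : ℕ) ≠ 0).card

/-- Strict lexicographic order on `k`-tuples, comparing coordinates from the
first one. -/
def lexLT {v k : ℕ} (x y : Fin k → Fin v) : Prop :=
  ∃ i, (∀ j, j < i → x j = y j) ∧ x i < y i

theorem exists_pivot_row (v t k : ℕ) (hv : 1 ≤ v) (ht : 1 ≤ t) (htk : t ≤ k)
    (x : Fin k → Fin v) (hx : Lwt x ≤ t) :
    ∃ r : {I : Finset (Fin k) // I.card = t} × (Fin k → Fin v),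
      inclusionMatrix v k t r x = 1 ∧
      ∀ y : Fin k → Fin v, lexLT y x → inclusionMatrix v k t r y = 0 := by
  set S := Finset.univ.filter fun i => (x i : ℕ) ≠ 0 with hS
  obtain ⟨I, hSI, _, hIcard⟩ := Finset.exists_subsuperset_card_eq
    (Finset.subset_univ S) hx (by simpa using htk)
  refine ⟨⟨⟨I, hIcard⟩, x⟩, ?_, ?_⟩
  · simp [inclusionMatrix]
  · rintro y ⟨i, -, hyi⟩
    have hyi' : (y i : ℕ) < (x i : ℕ) := hyi
    have hxi : (x i : ℕ) ≠ 0 := by omega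
    have hiI : i ∈ I := hSI (by simp [hS, hxi])
    simp only [inclusionMatrix, ite_eq_right_iff]
    intro h
    exact absurd (h i hiI) (ne_of_lt hyi)
end

section
/- For integers v ≥ 1 and 1 ≤ t ≤ k, the rank over ℝ of the t-inclusion matrix M_t(v,k) is at least ∑_{i=0}^{t} C(k,i)·(v−1)^i. -/
open Finset

section Aux

variable {v k t : ℕ} [NeZero v]

/-- Support of a tuple: coordinates with nonzero value. -/
def msupp (x : Fin k → Fin v) : Finset (Fin k) :=
  Finset.univ.filter (fun i => x i ≠ 0)

lemma mem_msupp {x : Fin k → Fin v} {i : Fin k} : i ∈ msupp x ↔ x i ≠ 0 := by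
  simp [msupp]

lemma card_fiber_msupp (s : Finset (Fin k)) :
    Fintype.card {x : Fin k → Fin v // msupp x = s} = (v - 1) ^ s.card := by
  have e : {x : Fin k → Fin v // msupp x = s} ≃
      ∀ i : Fin k, {a : Fin v // a ≠ 0 ↔ i ∈ s} := by
    refine (Equiv.subtypeEquiv (Equiv.refl _) ?_).trans (Equiv.subtypePiEquivPi)
    intro x
    simp [Finset.ext_iff, mem_msupp]
  rw [Fintype.card_congr e, Fintype.card_pi]
  have hcard : ∀ i : Fin k,
      Fintype.card {a : Fin v // a ≠ 0 ↔ i ∈ s} = if i ∈ s then v - 1 else 1 := by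
    intro i
    by_cases hi : i ∈ s
    · rw [if_pos hi]
      have e2 : {a : Fin v // a ≠ 0 ↔ i ∈ s} ≃ {a : Fin v // ¬ a = 0} :=
        Equiv.subtypeEquiv (Equiv.refl _) (by simp [hi])
      rw [Fintype.card_congr e2, Fintype.card_subtype_compl, Fintype.card_subtype_eq,
        Fintype.card_fin]
    · rw [if_neg hi]
      have e2 : {a : Fin v // a ≠ 0 ↔ i ∈ s} ≃ {a : Fin v // a = 0} :=
        Equiv.subtypeEquiv (Equiv.refl _) (by simp [hi])
      rw [Fintype.card_congr e2, Fintype.card_subtype_eq]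
  calc (∏ i : Fin k, Fintype.card {a : Fin v // a ≠ 0 ↔ i ∈ s})
      = ∏ i : Fin k, (if i ∈ s then v - 1 else 1) := by
        exact Finset.prod_congr rfl (fun i _ => hcard i)
    _ = ∏ i ∈ Finset.univ ∩ s, (v - 1) := Finset.prod_ite_mem _ _ _
    _ = (v - 1) ^ s.card := by rw [Finset.univ_inter, Finset.prod_const]

lemma card_small_supp :
    Fintype.card {x : Fin k → Fin v // (msupp x).card ≤ t} =
      ∑ i ∈ Finset.range (t + 1), k.choose i * (v - 1) ^ i := by
  classical
  rw [Fintype.card_subtype]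
  have hmap : ∀ x ∈ Finset.univ.filter (fun x : Fin k → Fin v => (msupp x).card ≤ t),
      msupp x ∈ (Finset.univ : Finset (Finset (Fin k))).filter (fun s => s.card ≤ t) := by
    intro x hx
    simp only [Finset.mem_filter, Finset.mem_univ, true_and] at hx ⊢
    exact hx
  rw [Finset.card_eq_sum_card_fiberwise hmap]
  have hfiber : ∀ s ∈ (Finset.univ : Finset (Finset (Fin k))).filter (fun s => s.card ≤ t),
      ((Finset.univ.filter (fun x : Fin k → Fin v => (msupp x).card ≤ t)).filter
        (fun x => msupp x = s)).card = (v - 1) ^ s.card := by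
    intro s hs
    simp only [Finset.mem_filter, Finset.mem_univ, true_and] at hs
    rw [Finset.filter_filter]
    have : (Finset.univ.filter fun x : Fin k → Fin v => (msupp x).card ≤ t ∧ msupp x = s) =
        Finset.univ.filter (fun x => msupp x = s) := by
      apply Finset.filter_congr
      intro x _
      constructor
      · exact fun h => h.2
      · exact fun h => ⟨by rw [h]; exact hs, h⟩
    rw [this, ← Fintype.card_subtype, card_fiber_msupp]
  rw [Finset.sum_congr rfl hfiber]
  have hmap2 : ∀ s ∈ (Finset.univ : Finset (Finset (Fin k))).filter (fun s => s.card ≤ t),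
      s.card ∈ Finset.range (t + 1) := by
    intro s hs
    simp only [Finset.mem_filter, Finset.mem_univ, true_and] at hs
    simpa [Finset.mem_range] using Nat.lt_succ_of_le hs
  rw [← Finset.sum_fiberwise_of_maps_to hmap2 (fun s => (v - 1) ^ s.card)]
  refine Finset.sum_congr rfl (fun i hi => ?_)
  simp only [Finset.mem_range] at hi
  have hset : ((Finset.univ : Finset (Finset (Fin k))).filter (fun s => s.card ≤ t)).filter
      (fun s => s.card = i) = Finset.powersetCard i (Finset.univ : Finset (Fin k)) := by
    ext s
    simp only [Finset.mem_filter, Finset.mem_univ, true_and, Finset.mem_powersetCard_univ]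
    constructor
    · exact fun h => h.2
    · exact fun h => ⟨by omega, h⟩
  rw [hset]
  have : ∀ s ∈ Finset.powersetCard i (Finset.univ : Finset (Fin k)),
      (v - 1) ^ s.card = (v - 1) ^ i := by
    intro s hs
    rw [Finset.mem_powersetCard_univ] at hs
    rw [hs]
  rw [Finset.sum_congr rfl this, Finset.sum_const, Finset.card_powersetCard,
    Finset.card_univ, Fintype.card_fin, smul_eq_mul]

lemma msupp_ssubset {x y : Fin k → Fin v} {I : Finset (Fin k)} (hs : msupp x ⊆ I)
    (h : ∀ i ∈ I, y i = x i) (hne : y ≠ x) : msupp x ⊂ msupp y := by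
  constructor
  · intro i hi
    rw [mem_msupp] at hi ⊢
    rw [h i (hs (mem_msupp.2 hi))]
    exact hi
  · intro hcon
    obtain ⟨i, hi⟩ := Function.ne_iff.1 hne
    have hiI : i ∉ I := fun hiI => hi (h i hiI)
    have hix : x i = 0 := by
      by_contra hx0
      exact hiI (hs (mem_msupp.2 hx0))
    have hiy : y i ≠ 0 := by rw [hix] at hi; exact hi
    have : i ∈ msupp x := hcon (mem_msupp.2 hiy)
    exact (mem_msupp.1 this) hix

end Aux

theorem rank_inclusionMatrix_ge (v t k : ℕ) (hv : 1 ≤ v) (ht : 1 ≤ t) (htk : t ≤ k) :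
    ∑ i ∈ Finset.range (t + 1), k.choose i * (v - 1) ^ i ≤
      (inclusionMatrix v k t).rank := by
  classical
  haveI : NeZero v := ⟨by omega⟩
  set M := inclusionMatrix v k t with hM
  set A := {x : Fin k → Fin v // (msupp x).card ≤ t}
  -- the columns indexed by small-support tuples
  set col : A → (({I : Finset (Fin k) // I.card = t} × (Fin k → Fin v)) → ℝ) :=
    fun x r => M r x.val with hcol
  -- linear independence
  have hli : LinearIndependent ℝ col := by
    rw [Fintype.linearIndependent_iff]
    intro g hg
    have key : ∀ n : ℕ, ∀ x : A, t - (msupp x.val).card = n → g x = 0 := by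
      intro n
      induction n using Nat.strong_induction_on with
      | _ n ih =>
        intro x hx
        obtain ⟨I, hsI, hIcard⟩ := Finset.exists_superset_card_eq (s := msupp x.val)
          (n := t) x.2 (by simpa [Fintype.card_fin] using htk)
        set r : {I : Finset (Fin k) // I.card = t} × (Fin k → Fin v) :=
          (⟨I, hIcard⟩, x.val) with hr
        have h0 : ∑ y : A, g y * M r y.val = 0 := by
          have := congrFun hg r
          simpa [hcol, Finset.sum_apply, Pi.smul_apply, smul_eq_mul] using this
        have hsingle : ∑ y : A, g y * M r y.val = g x * M r x.val := by
          refine Finset.sum_eq_single x ?_ (by simp)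
          intro y _ hyx
          by_cases hcond : ∀ i ∈ I, y.val i = x.val i
          · have hss : msupp x.val ⊂ msupp y.val := by
              refine msupp_ssubset hsI hcond ?_
              intro hc
              exact hyx (Subtype.ext hc)
            have hlt : (msupp x.val).card < (msupp y.val).card := Finset.card_lt_card hss
            have hy0 : g y = 0 := by
              refine ih (t - (msupp y.val).card) ?_ y rfl
              have hyt : (msupp y.val).card ≤ t := y.2
              omega
            rw [hy0, zero_mul]
          · have : M r y.val = 0 := by
              simp only [hM, inclusionMatrix, hr]
              exact if_neg hcond
            rw [this, mul_zero]
        have hdiag : M r x.val = 1 := by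
          simp [hM, inclusionMatrix, hr]
        rw [hsingle, hdiag, mul_one] at h0
        exact h0
    intro x
    exact key (t - (msupp x.val).card) x rfl
  -- columns are in the range of mulVecLin
  have hmem : ∀ x : A, col x ∈ LinearMap.range M.mulVecLin := by
    intro x
    refine ⟨Pi.single x.val 1, ?_⟩
    ext r
    rw [Matrix.mulVecLin_apply, Matrix.mulVec_single]
    simp [hcol]
  set col' : A → LinearMap.range M.mulVecLin := fun x => ⟨col x, hmem x⟩ with hcol'
  have hli' : LinearIndependent ℝ col' := by
    apply LinearIndependent.of_comp (LinearMap.range M.mulVecLin).subtype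
    exact hli
  have hcard := hli'.fintype_card_le_finrank
  rw [show Fintype.card A = ∑ i ∈ Finset.range (t + 1), k.choose i * (v - 1) ^ i from
    card_small_supp] at hcard
  exact hcard
end

section
/- Let 1 ≤ t ≤ k, v ≥ 1, and let x ∈ V^k satisfy L_x > t. Denoting by C_y the column of the t-inclusion matrix M_t(v,k) indexed by y, we have ∑_{y ∈ F_x} (−1)^{L_y} C_y = 0 (the zero vector). -/
/-- `F x` as a finset: the tuples each of whose coordinates is either `0` or
the corresponding coordinate of `x`. -/
def Fset {v k : ℕ} (x : Fin k → Fin v) : Finset (Fin k → Fin v) :=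
  Finset.univ.filter fun z => ∀ i, (z i : ℕ) = 0 ∨ z i = x i

lemma neg_one_pow_Lwt_update {v k : ℕ} (y : Fin k → Fin v) (j : Fin k) (c : Fin v)
    (h : ((y j : ℕ) = 0 ∧ (c : ℕ) ≠ 0) ∨ ((y j : ℕ) ≠ 0 ∧ (c : ℕ) = 0)) :
    (-1 : ℝ) ^ Lwt (Function.update y j c) = -(-1 : ℝ) ^ Lwt y := by
  classical
  set S := Finset.univ.filter fun i => (y i : ℕ) ≠ 0 with hS
  rcases h with ⟨h0, hc⟩ | ⟨h0, hc⟩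
  · have hfilter : (Finset.univ.filter fun i => ((Function.update y j c i : ℕ) ≠ 0))
        = insert j S := by
      ext i
      by_cases hij : i = j <;>
        simp [Function.update_apply, hij, hc, hS, Finset.mem_filter]
    have hjS : j ∉ S := by simp [hS, h0]
    have : Lwt (Function.update y j c) = Lwt y + 1 := by
      rw [Lwt, hfilter, Finset.card_insert_of_notMem hjS]; rfl
    rw [this, pow_succ]; ring
  · have hfilter : (Finset.univ.filter fun i => ((Function.update y j c i : ℕ) ≠ 0))
        = S.erase j := by
      ext i
      by_cases hij : i = j <;>
        simp [Function.update_apply, hij, hc, hS, Finset.mem_filter]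
    have hjS : j ∈ S := by simp [hS, h0]
    have h1 : Lwt y = (S.erase j).card + 1 := by
      rw [Lwt, ← hS, Finset.card_erase_of_mem hjS]
      have := Finset.card_pos.mpr ⟨j, hjS⟩
      omega
    have h2 : Lwt (Function.update y j c) = (S.erase j).card := by
      rw [Lwt, hfilter]
    rw [h1, h2, pow_succ]; ring

theorem alternating_sum_columns_eq_zero (v t k : ℕ) (hv : 1 ≤ v) (ht : 1 ≤ t)
    (htk : t ≤ k) (x : Fin k → Fin v) (hx : t < Lwt x) :
    ∑ y ∈ Fset x, ((-1 : ℝ) ^ Lwt y) • (fun r => inclusionMatrix v k t r y) =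
      (0 : ({I : Finset (Fin k) // I.card = t} × (Fin k → Fin v)) → ℝ) := by
  classical
  haveI : NeZero v := ⟨by omega⟩
  funext r
  simp only [Finset.sum_apply, Pi.smul_apply, Pi.zero_apply, smul_eq_mul]
  obtain ⟨j, hjx, hjI⟩ : ∃ j, (x j : ℕ) ≠ 0 ∧ j ∉ r.1.1 := by
    by_contra h
    push_neg at h
    have hsub : (Finset.univ.filter fun i => (x i : ℕ) ≠ 0) ⊆ r.1.1 := by
      intro i hi
      rw [Finset.mem_filter] at hi
      exact h i hi.2
    have := Finset.card_le_card hsub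
    rw [r.1.2] at this
    exact absurd hx (by unfold Lwt; omega)
  set σ : (Fin k → Fin v) → (Fin k → Fin v) :=
    fun y => Function.update y j (if (y j : ℕ) = 0 then x j else 0) with hσ
  have hσj : ∀ y, σ y j = if (y j : ℕ) = 0 then x j else 0 :=
    fun y => Function.update_self _ _ _
  have hσne : ∀ y i, i ≠ j → σ y i = y i :=
    fun y i hij => Function.update_of_ne hij _ _
  have hmemF : ∀ y, y ∈ Fset x → ∀ i, (y i : ℕ) = 0 ∨ y i = x i := by
    intro y hy
    simpa [Fset] using hy
  refine Finset.sum_involution (fun y _ => σ y) ?_ ?_ ?_ ?_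
  · intro y hy
    have hsign : (-1 : ℝ) ^ Lwt (σ y) = -(-1 : ℝ) ^ Lwt y := by
      apply neg_one_pow_Lwt_update
      by_cases h0 : (y j : ℕ) = 0
      · left; exact ⟨h0, by simpa [h0] using hjx⟩
      · right; exact ⟨h0, by simp [h0]⟩
    have hcond : (∀ i ∈ r.1.1, σ y i = r.2 i) ↔ (∀ i ∈ r.1.1, y i = r.2 i) := by
      constructor <;> intro h i hi <;>
        have hij : i ≠ j := fun hh => hjI (hh ▸ hi)
      · rw [← hσne y i hij]; exact h i hi
      · rw [hσne y i hij]; exact h i hi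
    show (-1:ℝ) ^ Lwt y * inclusionMatrix v k t r y
        + (-1:ℝ) ^ Lwt (σ y) * inclusionMatrix v k t r (σ y) = 0
    rw [inclusionMatrix, inclusionMatrix, hsign]
    simp only [hcond]
    ring
  · intro y hy _ heq
    have hjy : σ y j = y j := congrFun heq j
    rw [hσj y] at hjy
    by_cases h0 : (y j : ℕ) = 0
    · rw [if_pos h0] at hjy; exact hjx (hjy ▸ h0)
    · rw [if_neg h0] at hjy; exact h0 (by rw [← hjy]; simp)
  · intro y hy
    simp only [Fset, Finset.mem_filter, Finset.mem_univ, true_and]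
    intro i
    by_cases hij : i = j
    · subst hij
      rw [hσj y]
      by_cases h0 : (y i : ℕ) = 0
      · right; rw [if_pos h0]
      · left; rw [if_neg h0]; simp
    · rw [hσne y i hij]
      exact hmemF y hy i
  · intro y hy
    show σ (σ y) = y
    funext i
    by_cases hij : i = j
    · subst hij
      by_cases h0 : (y i : ℕ) = 0
      · have h1 : σ y i = x i := by rw [hσj y, if_pos h0]
        have h2 : (σ y i : ℕ) ≠ 0 := by rw [h1]; exact hjx
        rw [hσj (σ y), if_neg h2]
        exact Fin.ext (by simpa using h0.symm)
      · have h1 : σ y i = 0 := by rw [hσj y, if_neg h0]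
        have h2 : (σ y i : ℕ) = 0 := by rw [h1]; simp
        rw [hσj (σ y), if_pos h2]
        rcases hmemF y hy i with h | h
        · exact absurd h h0
        · exact h.symm
    · rw [hσne _ i hij, hσne _ i hij]
end

section
/- For integers v ≥ 1 and 1 ≤ t ≤ k, the rank over ℝ of the t-inclusion matrix M_t(v,k) is at most ∑_{i=0}^{t} C(k,i)·(v−1)^i; equivalently, the columns C_y of M_t(v,k) with L_y ≤ t span the column space of M_t(v,k). -/
open Finset Submodule

namespace IncAux

variable {v k t : ℕ}

noncomputable def col (v k t : ℕ) (y : Fin k → Fin v) :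
    ({I : Finset (Fin k) // I.card = t} × (Fin k → Fin v)) → ℝ :=
  fun r => inclusionMatrix v k t r y

noncomputable def zeroOut (h : 0 < v) (x : Fin k → Fin v) (T : Finset (Fin k)) :
    Fin k → Fin v :=
  fun i => if i ∈ T then ⟨0, h⟩ else x i

lemma key (h : 0 < v) (x : Fin k → Fin v) (S : Finset (Fin k)) (hS : S.card = t + 1) :
    ∑ T ∈ S.powerset, ((-1 : ℝ) ^ T.card) • col v k t (zeroOut h x T) = 0 := by
  funext r
  rw [Finset.sum_apply]
  obtain ⟨⟨I, hI⟩, u⟩ := r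
  have hlt : I.card < S.card := by rw [hI, hS]; omega
  have hns : ¬ S ⊆ I := fun hsub => absurd (Finset.card_le_card hsub) (by omega)
  obtain ⟨j, hjS, hjI⟩ := Finset.not_subset.mp hns
  rw [← Finset.insert_erase hjS,
    Finset.sum_powerset_insert (Finset.notMem_erase j S)]
  rw [← Finset.sum_add_distrib]
  refine Finset.sum_eq_zero fun T hT => ?_
  have hjT : j ∉ T := fun hj => Finset.notMem_erase j S (Finset.mem_powerset.mp hT hj)
  have hcond : (∀ i ∈ I, zeroOut h x (insert j T) i = u i) ↔
      (∀ i ∈ I, zeroOut h x T i = u i) := by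
    refine forall₂_congr fun i hi => ?_
    have hij : i ≠ j := fun hij => hjI (hij ▸ hi)
    simp [zeroOut, Finset.mem_insert, hij]
  simp only [Pi.smul_apply, smul_eq_mul, col, inclusionMatrix, hcond,
    Finset.card_insert_of_notMem hjT, pow_succ]
  ring

lemma col_mem_span (h : 0 < v) (x : Fin k → Fin v) :
    col v k t x ∈ span ℝ (col v k t '' {y | Lwt y ≤ t}) := by
  suffices H : ∀ n (x : Fin k → Fin v), Lwt x ≤ n →
      col v k t x ∈ span ℝ (col v k t '' {y | Lwt y ≤ t}) from H (Lwt x) x le_rfl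
  intro n
  induction n with
  | zero =>
    intro x hx
    exact subset_span ⟨x, by simp only [Set.mem_setOf_eq]; omega, rfl⟩
  | succ n ih =>
    intro x hx
    by_cases hxt : Lwt x ≤ t
    · exact subset_span ⟨x, hxt, rfl⟩
    · push_neg at hxt
      obtain ⟨S, hSsub, hScard⟩ := Finset.exists_subset_card_eq (show t + 1 ≤ Lwt x from hxt)
      have hid := key (t := t) h x S hScard
      -- x = zeroOut x ∅
      have hx0 : zeroOut h x ∅ = x := by funext i; simp [zeroOut]
      have hmem0 : (∅ : Finset (Fin k)) ∈ S.powerset := Finset.empty_mem_powerset S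
      rw [← Finset.add_sum_erase _ _ hmem0] at hid
      have hcolx : col v k t x =
          - ∑ T ∈ S.powerset.erase ∅, ((-1 : ℝ) ^ T.card) • col v k t (zeroOut h x T) := by
        rw [eq_neg_iff_add_eq_zero, ← hid, hx0]
        simp
      rw [hcolx]
      refine neg_mem (Submodule.sum_mem _ fun T hT => Submodule.smul_mem _ _ (ih _ ?_))
      -- Lwt (zeroOut h x T) ≤ n
      obtain ⟨hTne, hTpow⟩ := Finset.mem_erase.mp hT
      have hTsub : T ⊆ Finset.univ.filter fun i => (x i : ℕ) ≠ 0 :=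
        (Finset.mem_powerset.mp hTpow).trans hSsub
      have hssub : (Finset.univ.filter fun i => ((zeroOut h x T i : ℕ) ≠ 0)) ⊂
          Finset.univ.filter fun i => (x i : ℕ) ≠ 0 := by
        constructor
        · intro i hi
          rw [Finset.mem_filter] at hi
          simp only [Finset.mem_filter, Finset.mem_univ, true_and, zeroOut] at hi ⊢
          by_cases hiT : i ∈ T
          · simp [hiT] at hi
          · simpa [hiT] using hi
        · intro hcont
          obtain ⟨i, hiT⟩ := Finset.nonempty_iff_ne_empty.mpr hTne
          have := hcont (hTsub hiT)
          rw [Finset.mem_filter] at this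
          simp [zeroOut, hiT] at this
      have : Lwt (zeroOut h x T) < Lwt x := Finset.card_lt_card hssub
      omega

lemma card_fixed_support (h : 0 < v) (S : Finset (Fin k)) :
    (Finset.univ.filter fun y : Fin k → Fin v =>
      (Finset.univ.filter fun j => (y j : ℕ) ≠ 0) = S).card = (v - 1) ^ S.card := by
  have h1 : (Finset.univ.filter fun y : Fin k → Fin v =>
      (Finset.univ.filter fun j => (y j : ℕ) ≠ 0) = S).card
      = Fintype.card {y : Fin k → Fin v // ∀ j, ((y j : ℕ) ≠ 0 ↔ j ∈ S)} := by
    rw [Fintype.card_subtype]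
    congr 1
    apply Finset.filter_congr
    intro y _
    rw [Finset.ext_iff]
    simp
  rw [h1, Fintype.card_congr (Equiv.subtypePiEquivPi (β := fun _ : Fin k => Fin v)
    (p := fun j a => ((a : ℕ) ≠ 0 ↔ j ∈ S))), Fintype.card_pi]
  have h2 : ∀ j : Fin k, Fintype.card {a : Fin v // (a : ℕ) ≠ 0 ↔ j ∈ S}
      = if j ∈ S then v - 1 else 1 := by
    intro j
    by_cases hj : j ∈ S
    · simp only [hj, if_true]
      rw [Fintype.card_congr (Equiv.subtypeEquivRight
        (q := fun a : Fin v => ¬ (a = ⟨0, h⟩)) (fun a => by simp [hj, Fin.ext_iff]))]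
      rw [Fintype.card_subtype_compl, Fintype.card_subtype_eq, Fintype.card_fin]
    · simp only [hj, if_false]
      rw [Fintype.card_congr (Equiv.subtypeEquivRight
        (q := fun a : Fin v => a = ⟨0, h⟩) (fun a => by simp [hj, Fin.ext_iff]))]
      exact Fintype.card_subtype_eq _
  simp only [h2]
  rw [Finset.prod_ite_mem, Finset.univ_inter, Finset.prod_const]

lemma count (h : 0 < v) :
    (Finset.univ.filter fun y : Fin k → Fin v => Lwt y ≤ t).card =
      ∑ i ∈ Finset.range (t + 1), k.choose i * (v - 1) ^ i := by
  rw [Finset.card_eq_sum_card_fiberwise (f := Lwt) (t := Finset.range (t + 1))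
    (fun y hy => Finset.mem_range.mpr
      (Nat.lt_succ_of_le (Finset.mem_filter.mp hy).2))]
  refine Finset.sum_congr rfl fun i hi => ?_
  have hi' : i ≤ t := Nat.lt_succ_iff.mp (Finset.mem_range.mp hi)
  rw [Finset.filter_filter]
  have e1 : (Finset.univ.filter fun y : Fin k → Fin v => Lwt y ≤ t ∧ Lwt y = i)
      = Finset.univ.filter fun y : Fin k → Fin v => Lwt y = i := by
    apply Finset.filter_congr
    intro y _
    constructor
    · exact fun hy => hy.2
    · exact fun hy => ⟨hy ▸ hi', hy⟩
  rw [e1]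
  rw [Finset.card_eq_sum_card_fiberwise
    (f := fun y : Fin k → Fin v => Finset.univ.filter fun j => (y j : ℕ) ≠ 0)
    (s := Finset.univ.filter fun y : Fin k → Fin v => Lwt y = i)
    (t := Finset.powersetCard i (Finset.univ : Finset (Fin k)))
    (fun y hy => Finset.mem_powersetCard_univ.mpr (Finset.mem_filter.mp hy).2)]
  have e2 : ∀ S ∈ Finset.powersetCard i (Finset.univ : Finset (Fin k)),
      ((Finset.univ.filter fun y : Fin k → Fin v => Lwt y = i).filter
        fun y => (Finset.univ.filter fun j => (y j : ℕ) ≠ 0) = S).card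
      = (v - 1) ^ i := by
    intro S hS
    have hScard : S.card = i := Finset.mem_powersetCard_univ.mp hS
    rw [Finset.filter_filter]
    have e3 : (Finset.univ.filter fun y : Fin k → Fin v =>
        Lwt y = i ∧ (Finset.univ.filter fun j => (y j : ℕ) ≠ 0) = S)
        = Finset.univ.filter fun y : Fin k → Fin v =>
          (Finset.univ.filter fun j => (y j : ℕ) ≠ 0) = S := by
      apply Finset.filter_congr
      intro y _
      constructor
      · exact fun hy => hy.2
      · exact fun hy => ⟨by rw [Lwt, hy, hScard], hy⟩
    rw [e3, card_fixed_support h S, hScard]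
  rw [Finset.sum_congr rfl e2, Finset.sum_const, Finset.card_powersetCard,
    Finset.card_univ, Fintype.card_fin, smul_eq_mul]

end IncAux

theorem rank_inclusionMatrix_le (v t k : ℕ) (hv : 1 ≤ v) (ht : 1 ≤ t) (htk : t ≤ k) :
    (inclusionMatrix v k t).rank ≤
        ∑ i ∈ Finset.range (t + 1), k.choose i * (v - 1) ^ i ∧
      Submodule.span ℝ
          ((fun y => fun r => inclusionMatrix v k t r y) ''
            {y : Fin k → Fin v | Lwt y ≤ t}) =
        Submodule.span ℝ
          (Set.range fun y => fun r => inclusionMatrix v k t r y) := by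
  have h : 0 < v := hv
  have hspan : Submodule.span ℝ
      ((fun y => fun r => inclusionMatrix v k t r y) '' {y : Fin k → Fin v | Lwt y ≤ t})
      = Submodule.span ℝ (Set.range fun y => fun r => inclusionMatrix v k t r y) := by
    apply le_antisymm
    · exact Submodule.span_mono (Set.image_subset_range _ _)
    · rw [Submodule.span_le]
      rintro _ ⟨x, rfl⟩
      exact IncAux.col_mem_span h x
  refine ⟨?_, hspan⟩
  rw [Matrix.rank_eq_finrank_span_cols]
  have htr : Set.range (inclusionMatrix v k t).col
      = Set.range (fun y => fun r => inclusionMatrix v k t r y) := rfl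
  rw [htr, ← hspan]
  set F : Finset (({I : Finset (Fin k) // I.card = t} × (Fin k → Fin v)) → ℝ) :=
    (Finset.univ.filter fun y : Fin k → Fin v => Lwt y ≤ t).image
      (fun y => fun r => inclusionMatrix v k t r y) with hFdef
  have hF : (F : Set _) = (fun y => fun r => inclusionMatrix v k t r y) ''
      {y : Fin k → Fin v | Lwt y ≤ t} := by
    rw [hFdef, Finset.coe_image]
    congr 1
    ext y
    simp
  calc Module.finrank ℝ (Submodule.span ℝ ((fun y => fun r => inclusionMatrix v k t r y) ''
        {y : Fin k → Fin v | Lwt y ≤ t})) ≤ F.card := by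
        rw [← hF]; exact finrank_span_finset_le_card F
    _ ≤ (Finset.univ.filter fun y : Fin k → Fin v => Lwt y ≤ t).card :=
        Finset.card_image_le
    _ = ∑ i ∈ Finset.range (t + 1), k.choose i * (v - 1) ^ i := IncAux.count h
end

section
/- For integers v ≥ 1 and t ≥ 1, the null space of the t-inclusion matrix M_t(v,t+1), viewed as a linear map from ℝ^(V^(t+1)) (vectors indexed by (t+1)-tuples over V) to ℝ^(rows), has dimension (v−1)^(t+1). -/
open Finset

namespace InclAux

variable {v t : ℕ}

/-- the distinguished zero value in `Fin v` -/
def zz (hv : 1 ≤ v) : Fin v := ⟨0, hv⟩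

/-- embedding of `Fin (v-1)` onto nonzero values of `Fin v` -/
def emb (a : Fin (v - 1)) : Fin v := ⟨a.1 + 1, by omega⟩

lemma emb_inj {a b : Fin (v - 1)} (h : emb a = emb b) : a = b := by
  simpa [emb, Fin.ext_iff] using h

lemma emb_ne_zz (hv : 1 ≤ v) (a : Fin (v - 1)) : emb a ≠ zz hv := by
  simp [emb, zz, Fin.ext_iff]

lemma exists_compl (I : Finset (Fin (t + 1))) (hI : I.card = t) :
    ∃ j : Fin (t + 1), ∀ i, i ∈ I ↔ i ≠ j := by
  have hc : Iᶜ.card = 1 := by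
    rw [Finset.card_compl, hI]
    simp
  obtain ⟨j, hj⟩ := Finset.card_eq_one.mp hc
  refine ⟨j, fun i => ?_⟩
  constructor
  · intro hi hij
    subst hij
    have : i ∈ Iᶜ := by rw [hj]; simp
    exact (Finset.mem_compl.mp this) hi
  · intro hij
    by_contra h
    have : i ∈ Iᶜ := Finset.mem_compl.mpr h
    rw [hj] at this
    exact hij (Finset.mem_singleton.mp this)

lemma row_sum (I : Finset (Fin (t + 1))) (hI : I.card = t) (j : Fin (t + 1))
    (hj : ∀ i, i ∈ I ↔ i ≠ j) (u : Fin (t + 1) → Fin v)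
    (f : (Fin (t + 1) → Fin v) → ℝ) :
    (∑ x, inclusionMatrix v (t + 1) t (⟨I, hI⟩, u) x * f x)
      = ∑ c, f (Function.update u j c) := by
  have h1 : (∑ x, inclusionMatrix v (t + 1) t (⟨I, hI⟩, u) x * f x)
      = ∑ x ∈ univ.filter (fun x => ∀ i ∈ I, x i = u i), f x := by
    rw [Finset.sum_filter]
    simp [inclusionMatrix, ite_mul]
  have h2 : univ.filter (fun x : Fin (t + 1) → Fin v => ∀ i ∈ I, x i = u i)
      = univ.image (fun c => Function.update u j c) := by
    ext x
    simp only [Finset.mem_filter, Finset.mem_univ, true_and, Finset.mem_image]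
    constructor
    · intro hx
      refine ⟨x j, ?_⟩
      funext i
      by_cases hij : i = j
      · subst hij; simp
      · rw [Function.update_of_ne hij]
        exact (hx i ((hj i).mpr hij)).symm
    · rintro ⟨c, rfl⟩ i hi
      have : i ≠ j := (hj i).mp hi
      rw [Function.update_of_ne this]
  rw [h1, h2, Finset.sum_image]
  intro c _ c' _ h
  have := congrFun h j
  simpa using this

lemma mem_ker_iff (f : (Fin (t + 1) → Fin v) → ℝ) :
    f ∈ LinearMap.ker (inclusionMatrix v (t + 1) t).mulVecLin ↔
    ∀ (j : Fin (t + 1)) (y : Fin (t + 1) → Fin v),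
      ∑ c, f (Function.update y j c) = 0 := by
  rw [LinearMap.mem_ker]
  constructor
  · intro h j y
    have hI : (univ.erase j : Finset (Fin (t + 1))).card = t := by
      rw [Finset.card_erase_of_mem (mem_univ j)]
      simp
    have := congrFun h (⟨univ.erase j, hI⟩, y)
    rw [Matrix.mulVecLin_apply] at this
    have hrow := row_sum (univ.erase j) hI j (by simp) y f
    rw [Matrix.mulVec, dotProduct] at this
    rw [← hrow]
    exact this
  · intro h
    funext r
    obtain ⟨⟨I, hI⟩, u⟩ := r
    obtain ⟨j, hj⟩ := exists_compl I hI
    rw [Matrix.mulVecLin_apply, Matrix.mulVec, dotProduct]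
    rw [row_sum I hI j hj u f]
    exact h j u

/-- the "tensor basis" matrix -/
noncomputable def A (v t : ℕ) (hv : 1 ≤ v) :
    Matrix (Fin (t + 1) → Fin v) (Fin (t + 1) → Fin (v - 1)) ℝ :=
  fun x a => ∏ j, ((if x j = emb (a j) then 1 else 0) - (if x j = zz hv then 1 else 0))

lemma A_emb (hv : 1 ≤ v) (a b : Fin (t + 1) → Fin (v - 1)) :
    A v t hv (fun j => emb (a j)) b = if a = b then 1 else 0 := by
  unfold A
  have hterm : ∀ j, ((if emb (a j) = emb (b j) then (1:ℝ) else 0)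
      - (if emb (a j) = zz hv then 1 else 0)) = if a j = b j then 1 else 0 := by
    intro j
    rw [if_neg (emb_ne_zz hv (a j)), sub_zero]
    by_cases h : a j = b j
    · rw [if_pos h, if_pos (by rw [h])]
    · rw [if_neg h, if_neg (fun hc => h (emb_inj hc))]
  simp only [hterm]
  by_cases h : a = b
  · subst h; simp
  · rw [if_neg h]
    obtain ⟨j, hj⟩ := Function.ne_iff.mp h
    exact Finset.prod_eq_zero (mem_univ j) (by rw [if_neg hj])

lemma sum_A_update (hv : 1 ≤ v) (j : Fin (t + 1)) (y : Fin (t + 1) → Fin v)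
    (b : Fin (t + 1) → Fin (v - 1)) :
    ∑ c, A v t hv (Function.update y j c) b = 0 := by
  have key : ∀ c : Fin v, A v t hv (Function.update y j c) b
      = ((if c = emb (b j) then 1 else 0) - (if c = zz hv then 1 else 0))
        * ∏ j' ∈ univ \ {j},
            ((if y j' = emb (b j') then 1 else 0) - (if y j' = zz hv then 1 else 0)) := by
    intro c
    unfold A
    have : (fun j' => ((if Function.update y j c j' = emb (b j') then (1:ℝ) else 0)
        - (if Function.update y j c j' = zz hv then 1 else 0)))
        = Function.update
            (fun j' => ((if y j' = emb (b j') then (1:ℝ) else 0)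
              - (if y j' = zz hv then 1 else 0))) j
            ((if c = emb (b j) then 1 else 0) - (if c = zz hv then 1 else 0)) := by
      funext j'
      by_cases h : j' = j
      · subst h; simp
      · rw [Function.update_of_ne h, Function.update_of_ne h]
    rw [this, Finset.prod_update_of_mem (mem_univ j)]
  simp only [key]
  rw [← Finset.sum_mul]
  have : (∑ c : Fin v, ((if c = emb (b j) then (1:ℝ) else 0)
      - (if c = zz hv then 1 else 0))) = 0 := by
    rw [Finset.sum_sub_distrib]
    simp
  rw [this, zero_mul]

end InclAux

open InclAux in
theorem nullity_inclusionMatrix (v t : ℕ) (hv : 1 ≤ v) (ht : 1 ≤ t) :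
    Module.finrank ℝ
        (LinearMap.ker (inclusionMatrix v (t + 1) t).mulVecLin) =
      (v - 1) ^ (t + 1) := by
  classical
  set K := LinearMap.ker (inclusionMatrix v (t + 1) t).mulVecLin with hK
  -- Φ : functions on small cube → big space
  set Φ : ((Fin (t + 1) → Fin (v - 1)) → ℝ) →ₗ[ℝ] ((Fin (t + 1) → Fin v) → ℝ) :=
    (A v t hv).mulVecLin with hΦ
  set R : ((Fin (t + 1) → Fin v) → ℝ) →ₗ[ℝ] ((Fin (t + 1) → Fin (v - 1)) → ℝ) :=
    LinearMap.funLeft ℝ ℝ (fun a j => emb (a j)) with hR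
  have hΦ_apply : ∀ g x, Φ g x = ∑ b, A v t hv x b * g b := by
    intro g x
    rw [hΦ, Matrix.mulVecLin_apply, Matrix.mulVec, dotProduct]
  -- Φ lands in the kernel
  have hΦ_mem : ∀ g, Φ g ∈ K := by
    intro g
    rw [hK, mem_ker_iff]
    intro j y
    simp only [hΦ_apply]
    rw [Finset.sum_comm]
    refine Finset.sum_eq_zero fun b _ => ?_
    rw [← Finset.sum_mul, sum_A_update hv j y b, zero_mul]
  -- R ∘ Φ = id
  have hRΦ : ∀ g, R (Φ g) = g := by
    intro g
    funext a
    rw [hR]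
    simp only [LinearMap.funLeft_apply]
    rw [hΦ_apply]
    simp only [A_emb hv]
    simp
  -- vanishing lemma
  have vanish : ∀ f : (Fin (t + 1) → Fin v) → ℝ,
      (∀ (j : Fin (t + 1)) (y : Fin (t + 1) → Fin v),
        ∑ c, f (Function.update y j c) = 0) →
      (∀ a : Fin (t + 1) → Fin (v - 1), f (fun j => emb (a j)) = 0) →
      ∀ (n : ℕ) (x), (univ.filter (fun j => x j = zz hv)).card = n → f x = 0 := by
    intro f hker h0 n
    induction n with
    | zero =>
      intro x hx
      have hne : ∀ j, x j ≠ zz hv := by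
        intro j hj
        have : j ∈ univ.filter (fun j => x j = zz hv) := by simp [hj]
        rw [Finset.card_eq_zero.mp hx] at this
        exact absurd this (Finset.notMem_empty j)
      have hpos : ∀ j, (x j).1 ≠ 0 := by
        intro j hj
        exact hne j (by simp [zz, Fin.ext_iff, hj])
      set a : Fin (t + 1) → Fin (v - 1) := fun j =>
        ⟨(x j).1 - 1, by have := (x j).isLt; have := hpos j; omega⟩ with ha
      have : x = fun j => emb (a j) := by
        funext j
        simp only [ha, emb, Fin.ext_iff]
        have := hpos j
        omega
      rw [this]
      exact h0 a
    | succ n ih =>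
      intro x hx
      have hne : (univ.filter (fun j => x j = zz hv)).Nonempty := by
        rw [← Finset.card_pos, hx]; omega
      obtain ⟨j, hj⟩ := hne
      rw [Finset.mem_filter] at hj
      have hxj : x j = zz hv := hj.2
      have hsum := hker j x
      have hcount : ∀ c : Fin v, c ≠ zz hv →
          (univ.filter (fun j' => Function.update x j c j' = zz hv)).card = n := by
        intro c hc
        have heq : univ.filter (fun j' => Function.update x j c j' = zz hv)
            = (univ.filter (fun j' => x j' = zz hv)).erase j := by
          ext j'
          simp only [Finset.mem_filter, Finset.mem_univ, true_and, Finset.mem_erase]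
          by_cases h : j' = j
          · subst h; simp [hc]
          · rw [Function.update_of_ne h]
            tauto
        rw [heq, Finset.card_erase_of_mem (by simp [hxj]), hx]
        omega
      have hterm : ∀ c ∈ univ.erase (zz hv), f (Function.update x j c) = 0 := by
        intro c hc
        rw [Finset.mem_erase] at hc
        exact ih (Function.update x j c) (hcount c hc.1)
      have hsplit : ∑ c, f (Function.update x j c)
          = f (Function.update x j (zz hv))
            + ∑ c ∈ univ.erase (zz hv), f (Function.update x j c) := by
        rw [← Finset.add_sum_erase _ _ (mem_univ (zz hv))]
      rw [hsplit, Finset.sum_eq_zero hterm, add_zero] at hsum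
      rw [← hxj, Function.update_eq_self] at hsum
      exact hsum
  -- Φ ∘ R = id on the kernel
  have hΦR : ∀ f, f ∈ K → Φ (R f) = f := by
    intro f hf
    have hg : ∀ x, (f - Φ (R f)) x = 0 := by
      intro x
      refine vanish (f - Φ (R f)) ?_ ?_
        ((univ.filter (fun j => x j = zz hv)).card) x rfl
      · intro j y
        have h1 := (mem_ker_iff f).mp hf j y
        have h2 := (mem_ker_iff (Φ (R f))).mp (hΦ_mem (R f)) j y
        simp only [Pi.sub_apply, Finset.sum_sub_distrib, h1, h2, sub_zero]
      · intro a
        have := congrFun (hRΦ (R f)) a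
        simp only [hR, LinearMap.funLeft_apply] at this ⊢
        simp only [Pi.sub_apply]
        rw [this]
        ring
    funext x
    have := hg x
    simp only [Pi.sub_apply] at this
    linarith
  -- build the equivalence
  let Φ' : ((Fin (t + 1) → Fin (v - 1)) → ℝ) →ₗ[ℝ] K :=
    Φ.codRestrict K hΦ_mem
  let R' : K →ₗ[ℝ] ((Fin (t + 1) → Fin (v - 1)) → ℝ) := R.comp K.subtype
  have e : ((Fin (t + 1) → Fin (v - 1)) → ℝ) ≃ₗ[ℝ] K := by
    refine LinearEquiv.ofLinear Φ' R' ?_ ?_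
    · apply LinearMap.ext
      rintro ⟨f, hf⟩
      simp only [LinearMap.comp_apply, LinearMap.id_apply]
      apply Subtype.ext
      simp only [Φ', R', LinearMap.codRestrict_apply, LinearMap.comp_apply,
        Submodule.coe_subtype]
      exact hΦR f hf
    · apply LinearMap.ext
      intro g
      simp only [LinearMap.comp_apply, LinearMap.id_apply, Φ', R',
        LinearMap.codRestrict_apply, Submodule.coe_subtype]
      rw [hRΦ g]
  rw [← e.finrank_eq]
  rw [Module.finrank_fintype_fun_eq_card]
  simp [Fintype.card_fun]
end

section
/- Let v ≥ 2. The family of (v−1)³ vectors {T_{ijk} : 1 ≤ i,j,k ≤ v−1}, where T_{ijk}(a,b,c) = (δ_{a,0} − δ_{a,i})·(δ_{b,0} − δ_{b,j})·(δ_{c,0} − δ_{c,k}), forms a basis over ℝ of the null space of the 2-inclusion matrix M_2(v,3). -/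
/-- Kronecker delta `δ_{a,b}` on `Fin v`, valued in `ℝ`. -/
def kdel {v : ℕ} (a b : Fin v) : ℝ := if a = b then 1 else 0

/-- Kronecker delta `δ_{a,0}` on `Fin v`, valued in `ℝ`. -/
def kdel0 {v : ℕ} (a : Fin v) : ℝ := if (a : ℕ) = 0 then 1 else 0

/-- The intercalate vector `T_{ijk}`, indexed by triples `(a,b,c) ∈ V³`
(encoded as `x : Fin 3 → Fin v`):
`T_{ijk}(a,b,c) = (δ_{a,0} − δ_{a,i})·(δ_{b,0} − δ_{b,j})·(δ_{c,0} − δ_{c,k})`. -/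
def interT {v : ℕ} (i j k : Fin v) : (Fin 3 → Fin v) → ℝ :=
  fun x =>
    (kdel0 (x 0) - kdel (x 0) i) * (kdel0 (x 1) - kdel (x 1) j) *
      (kdel0 (x 2) - kdel (x 2) k)

namespace IntercalateAux
variable {v : ℕ}

lemma eta3 (x : Fin 3 → Fin v) : ![x 0, x 1, x 2] = x := by
  funext i; fin_cases i <;> rfl

def e3 (v : ℕ) : Fin v × Fin v × Fin v ≃ (Fin 3 → Fin v) where
  toFun p := ![p.1, p.2.1, p.2.2]
  invFun x := (x 0, x 1, x 2)
  left_inv _ := rfl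
  right_inv x := eta3 x

lemma sum_fn3 (g : (Fin 3 → Fin v) → ℝ) :
    ∑ x : Fin 3 → Fin v, g x = ∑ a : Fin v, ∑ b : Fin v, ∑ c : Fin v, g ![a, b, c] := by
  rw [← Equiv.sum_comp (e3 v) g, Fintype.sum_prod_type]
  simp [e3, Fintype.sum_prod_type]
  rfl

lemma core (a : Fin v) (g : Fin v → ℝ) (hg : ∑ t, g t = 0) :
    ∑ t, (kdel0 a - kdel a t) * g t = -(g a) := by
  simp only [sub_mul, Finset.sum_sub_distrib, ← Finset.mul_sum, hg, mul_zero, kdel, ite_mul,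
    one_mul, zero_mul, Finset.sum_ite_eq, Finset.mem_univ, if_true, zero_sub]

lemma kdel_zero [NeZero v] (a : Fin v) : kdel a (0 : Fin v) = kdel0 a := by
  unfold kdel kdel0
  congr 1
  exact propext (Fin.ext_iff.trans (by simp))

lemma sum_kdel0 [NeZero v] : ∑ c : Fin v, kdel0 c = 1 := by
  have h : ∀ c : Fin v, kdel0 c = if c = 0 then 1 else 0 := by
    intro c; unfold kdel0; congr 1; exact propext ((Fin.ext_iff.trans (by simp)).symm)
  rw [Finset.sum_congr rfl (fun c _ => h c),
    Finset.sum_ite_eq' Finset.univ (0 : Fin v) (fun _ => (1 : ℝ))]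
  simp

lemma sum_kdel (k : Fin v) : ∑ c : Fin v, kdel c k = 1 := by
  rw [show (fun c : Fin v => kdel c k) = fun c => if c = k then (1:ℝ) else 0 from rfl,
    Finset.sum_ite_eq' Finset.univ k (fun _ => (1 : ℝ))]
  simp

lemma sum_kdel_sub [NeZero v] (k : Fin v) : ∑ c : Fin v, (kdel0 c - kdel c k) = 0 := by
  rw [Finset.sum_sub_distrib, sum_kdel0, sum_kdel, sub_self]

lemma sum_ne0 [NeZero v] (F : Fin v → ℝ) (h0 : F 0 = 0) :
    ∑ i : {i : Fin v // (i : ℕ) ≠ 0}, F i.1 = ∑ i, F i := by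
  rw [← Finset.sum_filter_of_ne (p := fun i : Fin v => (i : ℕ) ≠ 0)
    (fun x _ hx => fun hx0 => hx (by rwa [show x = 0 from Fin.ext hx0]))]
  rw [← Finset.sum_subtype (Finset.univ.filter (fun i : Fin v => (i : ℕ) ≠ 0))
    (p := fun i : Fin v => (i : ℕ) ≠ 0) ?_ F]
  intro x; simp

lemma collapse01 (f : (Fin 3 → Fin v) → ℝ) (u : Fin 3 → Fin v) :
    ∑ x : Fin 3 → Fin v,
      (if ∀ i ∈ ({0,1} : Finset (Fin 3)), x i = u i then (1:ℝ) else 0) * f x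
      = ∑ c, f ![u 0, u 1, c] := by
  rw [sum_fn3 (fun x => (if ∀ i ∈ ({0,1} : Finset (Fin 3)), x i = u i then (1:ℝ) else 0) * f x)]
  simp only [Finset.mem_insert, Finset.mem_singleton, forall_eq_or_imp, forall_eq,
    Matrix.cons_val_zero, Matrix.cons_val_one, Matrix.head_cons, ite_mul, one_mul, zero_mul]
  simp [ite_and, Finset.sum_ite_eq']

lemma collapse02 (f : (Fin 3 → Fin v) → ℝ) (u : Fin 3 → Fin v) :
    ∑ x : Fin 3 → Fin v,
      (if ∀ i ∈ ({0,2} : Finset (Fin 3)), x i = u i then (1:ℝ) else 0) * f x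
      = ∑ b, f ![u 0, b, u 2] := by
  rw [sum_fn3 (fun x => (if ∀ i ∈ ({0,2} : Finset (Fin 3)), x i = u i then (1:ℝ) else 0) * f x)]
  simp only [Finset.mem_insert, Finset.mem_singleton, forall_eq_or_imp, forall_eq,
    Matrix.cons_val_zero, Matrix.cons_val_one, Matrix.head_cons, ite_mul, one_mul, zero_mul]
  rw [Finset.sum_comm]
  simp only [ite_and]
  simp [Finset.sum_ite_eq']
  exact Finset.sum_congr rfl fun _ _ => (Fintype.sum_eq_single (u 2) (fun y hy => if_neg hy)).trans (if_pos rfl)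

lemma collapse12 (f : (Fin 3 → Fin v) → ℝ) (u : Fin 3 → Fin v) :
    ∑ x : Fin 3 → Fin v,
      (if ∀ i ∈ ({1,2} : Finset (Fin 3)), x i = u i then (1:ℝ) else 0) * f x
      = ∑ a, f ![a, u 1, u 2] := by
  rw [sum_fn3 (fun x => (if ∀ i ∈ ({1,2} : Finset (Fin 3)), x i = u i then (1:ℝ) else 0) * f x)]
  simp only [Finset.mem_insert, Finset.mem_singleton, forall_eq_or_imp, forall_eq,
    Matrix.cons_val_zero, Matrix.cons_val_one, Matrix.head_cons, ite_mul, one_mul, zero_mul]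
  simp only [ite_and]
  simp [Finset.sum_ite_eq']
  exact Finset.sum_congr rfl fun _ _ => (Fintype.sum_eq_single (u 2) (fun y hy => if_neg hy)).trans (if_pos rfl)

lemma triple (F : Fin v → Fin v → Fin v → ℝ)
    (hA : ∀ i j, ∑ k, F i j k = 0) (hB : ∀ i k, ∑ j, F i j k = 0)
    (hC : ∀ j k, ∑ i, F i j k = 0) (a b c : Fin v) :
    ∑ i, ∑ j, ∑ k, (-(F i j k)) *
      ((kdel0 a - kdel a i) * (kdel0 b - kdel b j) * (kdel0 c - kdel c k)) = F a b c := by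
  have h1 : ∀ i j, ∑ k, (-(F i j k)) *
      ((kdel0 a - kdel a i) * (kdel0 b - kdel b j) * (kdel0 c - kdel c k))
      = ((kdel0 a - kdel a i) * (kdel0 b - kdel b j)) * (F i j c) := by
    intro i j
    have hc := core c (fun k => -(F i j k)) (by rw [Finset.sum_neg_distrib, hA i j, neg_zero])
    calc ∑ k, (-(F i j k)) *
        ((kdel0 a - kdel a i) * (kdel0 b - kdel b j) * (kdel0 c - kdel c k))
        = ((kdel0 a - kdel a i) * (kdel0 b - kdel b j)) *
          ∑ k, (kdel0 c - kdel c k) * (-(F i j k)) := by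
          rw [Finset.mul_sum]; exact Finset.sum_congr rfl fun k _ => by ring
      _ = _ := by rw [hc]; ring
  have h2 : ∀ i, ∑ j, ((kdel0 a - kdel a i) * (kdel0 b - kdel b j)) * (F i j c)
      = (kdel0 a - kdel a i) * (-(F i b c)) := by
    intro i
    have hb := core b (fun j => F i j c) (hB i c)
    calc ∑ j, ((kdel0 a - kdel a i) * (kdel0 b - kdel b j)) * (F i j c)
        = (kdel0 a - kdel a i) * ∑ j, (kdel0 b - kdel b j) * (F i j c) := by
          rw [Finset.mul_sum]; exact Finset.sum_congr rfl fun j _ => by ring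
      _ = _ := by rw [hb]
  have h3 : ∑ i, (kdel0 a - kdel a i) * (-(F i b c)) = F a b c := by
    have ha := core a (fun i => -(F i b c)) (by rw [Finset.sum_neg_distrib, hC b c, neg_zero])
    rw [ha, neg_neg]
  rw [Finset.sum_congr rfl (fun i _ => Finset.sum_congr rfl (fun j _ => h1 i j)),
    Finset.sum_congr rfl (fun i _ => h2 i), h3]

end IntercalateAux
open IntercalateAux in
/-- The family `{T_{ijk} : 1 ≤ i,j,k ≤ v−1}` is a basis of the null space of
`M_2(v,3)`: it is linearly independent and spans the null space. -/
theorem intercalates_basis_nullspace (v : ℕ) (hv : 2 ≤ v) :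
    LinearIndependent ℝ
        (fun p : {i : Fin v // (i : ℕ) ≠ 0} × {j : Fin v // (j : ℕ) ≠ 0} ×
            {k : Fin v // (k : ℕ) ≠ 0} =>
          interT p.1.1 p.2.1.1 p.2.2.1) ∧
      Submodule.span ℝ
          (Set.range
            (fun p : {i : Fin v // (i : ℕ) ≠ 0} × {j : Fin v // (j : ℕ) ≠ 0} ×
                {k : Fin v // (k : ℕ) ≠ 0} =>
              interT p.1.1 p.2.1.1 p.2.2.1)) =
        LinearMap.ker (inclusionMatrix v 3 2).mulVecLin := by
  have : NeZero v := ⟨by omega⟩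
  constructor
  · -- linear independence
    rw [Fintype.linearIndependent_iff]
    intro g hg p
    have h := congrFun hg ![p.1.1, p.2.1.1, p.2.2.1]
    simp only [Finset.sum_apply, Pi.smul_apply, smul_eq_mul, Pi.zero_apply] at h
    rw [Finset.sum_eq_single p ?side1 ?side2] at h
    · have hval : interT p.1.1 p.2.1.1 p.2.2.1 ![p.1.1, p.2.1.1, p.2.2.1] = -1 := by
        simp [interT, kdel, kdel0, p.1.2, p.2.1.2, p.2.2.2]
      rw [hval] at h
      linarith
    · intro q _ hq
      have hcomp : q.1 ≠ p.1 ∨ q.2.1 ≠ p.2.1 ∨ q.2.2 ≠ p.2.2 := by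
        by_contra hcon
        push_neg at hcon
        exact hq (Prod.ext hcon.1 (Prod.ext hcon.2.1 hcon.2.2))
      rcases hcomp with h'|h'|h'
      · have : p.1.1 ≠ q.1.1 := fun e => h' (Subtype.ext e.symm)
        simp [interT, kdel, kdel0, p.1.2, this]
      · have : p.2.1.1 ≠ q.2.1.1 := fun e => h' (Subtype.ext e.symm)
        simp [interT, kdel, kdel0, p.2.1.2, this]
      · have : p.2.2.1 ≠ q.2.2.1 := fun e => h' (Subtype.ext e.symm)
        simp [interT, kdel, kdel0, p.2.2.2, this]
    · intro hp; exact absurd (Finset.mem_univ p) hp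
  · -- span = kernel
    apply le_antisymm
    · -- span ⊆ ker
      rw [Submodule.span_le]
      rintro _ ⟨⟨i, j, k⟩, rfl⟩
      simp only [SetLike.mem_coe, LinearMap.mem_ker]
      funext r
      obtain ⟨⟨I, hI⟩, u⟩ := r
      have hrow : (inclusionMatrix v 3 2).mulVecLin (interT i.1 j.1 k.1) (⟨I, hI⟩, u)
          = ∑ x : Fin 3 → Fin v,
            (if ∀ i' ∈ I, x i' = u i' then (1:ℝ) else 0) * interT i.1 j.1 k.1 x := rfl
      rw [Pi.zero_apply, hrow]
      have hIcases : I = {0,1} ∨ I = {0,2} ∨ I = {1,2} :=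
        (by decide : ∀ I : Finset (Fin 3), I.card = 2 →
          I = {0,1} ∨ I = {0,2} ∨ I = {1,2}) I hI
      rcases hIcases with rfl|rfl|rfl
      · rw [collapse01]
        have : ∀ c : Fin v, interT i.1 j.1 k.1 ![u 0, u 1, c]
            = ((kdel0 (u 0) - kdel (u 0) i.1) * (kdel0 (u 1) - kdel (u 1) j.1))
               * (kdel0 c - kdel c k.1) := fun c => rfl
        rw [Finset.sum_congr rfl (fun c _ => this c), ← Finset.mul_sum,
          sum_kdel_sub, mul_zero]
      · rw [collapse02]
        have : ∀ b : Fin v, interT i.1 j.1 k.1 ![u 0, b, u 2]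
            = ((kdel0 (u 0) - kdel (u 0) i.1) * (kdel0 (u 2) - kdel (u 2) k.1))
               * (kdel0 b - kdel b j.1) := fun b => by
          show (kdel0 (u 0) - kdel (u 0) i.1) * (kdel0 b - kdel b j.1) *
            (kdel0 (u 2) - kdel (u 2) k.1) = _
          ring
        rw [Finset.sum_congr rfl (fun b _ => this b), ← Finset.mul_sum,
          sum_kdel_sub, mul_zero]
      · rw [collapse12]
        have : ∀ a : Fin v, interT i.1 j.1 k.1 ![a, u 1, u 2]
            = ((kdel0 (u 1) - kdel (u 1) j.1) * (kdel0 (u 2) - kdel (u 2) k.1))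
               * (kdel0 a - kdel a i.1) := fun a => by
          show (kdel0 a - kdel a i.1) * (kdel0 (u 1) - kdel (u 1) j.1) *
            (kdel0 (u 2) - kdel (u 2) k.1) = _
          ring
        rw [Finset.sum_congr rfl (fun a _ => this a), ← Finset.mul_sum,
          sum_kdel_sub, mul_zero]
    · -- ker ⊆ span
      intro f hf
      have hrow : ∀ r : {I : Finset (Fin 3) // I.card = 2} × (Fin 3 → Fin v),
          ∑ x : Fin 3 → Fin v,
          (if ∀ i' ∈ r.1.1, x i' = r.2 i' then (1:ℝ) else 0) * f x = 0 := by
        intro r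
        exact congrFun (LinearMap.mem_ker.mp hf) r
      have hA : ∀ a b : Fin v, ∑ c, f ![a, b, c] = 0 := by
        intro a b
        have := hrow (⟨{0,1}, by decide⟩, ![a, b, a])
        rw [collapse01 f ![a, b, a]] at this
        simpa using this
      have hB : ∀ a c : Fin v, ∑ b, f ![a, b, c] = 0 := by
        intro a c
        have := hrow (⟨{0,2}, by decide⟩, ![a, a, c])
        rw [collapse02 f ![a, a, c]] at this
        simpa using this
      have hC : ∀ b c : Fin v, ∑ a, f ![a, b, c] = 0 := by
        intro b c
        have := hrow (⟨{1,2}, by decide⟩, ![b, b, c])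
        rw [collapse12 f ![b, b, c]] at this
        simpa using this
      rw [Submodule.mem_span_range_iff_exists_fun]
      refine ⟨fun p => -(f ![p.1.1, p.2.1.1, p.2.2.1]), ?_⟩
      funext x
      rw [Finset.sum_apply]
      have hterm : ∀ p : {i : Fin v // (i : ℕ) ≠ 0} × {j : Fin v // (j : ℕ) ≠ 0} ×
          {k : Fin v // (k : ℕ) ≠ 0},
          ((-(f ![p.1.1, p.2.1.1, p.2.2.1])) • interT p.1.1 p.2.1.1 p.2.2.1) x
          = (-(f ![p.1.1, p.2.1.1, p.2.2.1])) * interT p.1.1 p.2.1.1 p.2.2.1 x := fun p => rfl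
      rw [Finset.sum_congr rfl (fun p _ => hterm p)]
      set G : Fin v → Fin v → Fin v → ℝ :=
        fun i j k => (-(f ![i, j, k])) * interT i j k x with hG
      have hsum : ∑ p : {i : Fin v // (i : ℕ) ≠ 0} × {j : Fin v // (j : ℕ) ≠ 0} ×
          {k : Fin v // (k : ℕ) ≠ 0}, G p.1.1 p.2.1.1 p.2.2.1
          = ∑ i : Fin v, ∑ j : Fin v, ∑ k : Fin v, G i j k := by
        rw [Fintype.sum_prod_type]
        rw [sum_ne0 (fun i => ∑ q : {j : Fin v // (j : ℕ) ≠ 0} × {k : Fin v // (k : ℕ) ≠ 0},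
          G i q.1.1 q.2.1) ?_]
        · refine Finset.sum_congr rfl fun i _ => ?_
          rw [Fintype.sum_prod_type]
          rw [sum_ne0 (fun j => ∑ k : {k : Fin v // (k : ℕ) ≠ 0}, G i j k.1) ?_]
          · refine Finset.sum_congr rfl fun j _ => ?_
            rw [sum_ne0 (fun k => G i j k) ?_]
            simp [hG, interT, kdel_zero]
          · refine Finset.sum_eq_zero fun k _ => ?_
            simp [hG, interT, kdel_zero]
        · refine Finset.sum_eq_zero fun q _ => ?_
          simp [hG, interT, kdel_zero]
      rw [hsum]
      have := triple (fun i j k => f ![i, j, k]) hA hB hC (x 0) (x 1) (x 2)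
      rw [show (∑ i : Fin v, ∑ j : Fin v, ∑ k : Fin v, G i j k) =
        ∑ i, ∑ j, ∑ k, (-(f ![i, j, k])) *
          ((kdel0 (x 0) - kdel (x 0) i) * (kdel0 (x 1) - kdel (x 1) j) *
            (kdel0 (x 2) - kdel (x 2) k)) from rfl, this, eta3]
end

section
/- Let v ≥ 1 and let P, Q ⊆ V³ be finite sets of triples (i,j;s) (row, column, symbol) such that: (1) P and Q occupy the same set of cells, i.e., {(i,j) : ∃s, (i,j,s) ∈ P} = {(i,j) : ∃s, (i,j,s) ∈ Q}, and each of P and Q contains at most one symbol per cell; (2) for every cell (i,j) occupied by both, the symbol of P at (i,j) differs from the symbol of Q at (i,j); (3) for every row r, the set of symbols occurring in row r of P equals the set of symbols occurring in row r of Q, and each symbol occurs at most once in each row of P and of Q; (4) the same holds for every column. Then the signed frequency vector T ∈ ℝ^(V³) defined by T(i,j,s) = 1 if (i,j,s) ∈ P, T(i,j,s) = −1 if (i,j,s) ∈ Q, and T(i,j,s) = 0 otherwise, satisfies M_2(v,3) · T = 0. -/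
theorem latinTrade_mem_nullspace (v : ℕ) (hv : 1 ≤ v)
    (P Q : Finset (Fin v × Fin v × Fin v))
    -- (1) same set of occupied cells
    (hcells : ∀ i j : Fin v, (∃ s, (i, j, s) ∈ P) ↔ (∃ s, (i, j, s) ∈ Q))
    -- (1) at most one symbol per cell
    (hPcell : ∀ i j s s', (i, j, s) ∈ P → (i, j, s') ∈ P → s = s')
    (hQcell : ∀ i j s s', (i, j, s) ∈ Q → (i, j, s') ∈ Q → s = s')
    -- (2) the symbols of `P` and `Q` differ at every occupied cell
    (hdisj : ∀ i j s s', (i, j, s) ∈ P → (i, j, s') ∈ Q → s ≠ s')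
    -- (3) each row of `P` and of `Q` contains the same set of symbols,
    -- each at most once
    (hrows : ∀ r s : Fin v, (∃ c, (r, c, s) ∈ P) ↔ (∃ c, (r, c, s) ∈ Q))
    (hProw : ∀ r c c' s, (r, c, s) ∈ P → (r, c', s) ∈ P → c = c')
    (hQrow : ∀ r c c' s, (r, c, s) ∈ Q → (r, c', s) ∈ Q → c = c')
    -- (4) each column of `P` and of `Q` contains the same set of symbols,
    -- each at most once
    (hcols : ∀ c s : Fin v, (∃ r, (r, c, s) ∈ P) ↔ (∃ r, (r, c, s) ∈ Q))
    (hPcol : ∀ r r' c s, (r, c, s) ∈ P → (r', c, s) ∈ P → r = r')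
    (hQcol : ∀ r r' c s, (r, c, s) ∈ Q → (r', c, s) ∈ Q → r = r')
    -- the signed frequency vector of the trade `(P,Q)`
    (T : (Fin 3 → Fin v) → ℝ)
    (hT : ∀ x : Fin 3 → Fin v,
      T x = if (x 0, x 1, x 2) ∈ P then 1
            else if (x 0, x 1, x 2) ∈ Q then -1 else 0) :
    (inclusionMatrix v 3 2).mulVec T = 0 := by

  classical
  have hdisjPQ : ∀ x : Fin 3 → Fin v,
      (x 0, x 1, x 2) ∈ P → (x 0, x 1, x 2) ∈ Q → False := by
    intro x hp hq; exact hdisj _ _ _ _ hp hq rfl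
  have cardeq : ∀ (A B : Finset (Fin 3 → Fin v)),
      (∀ a ∈ A, ∀ b ∈ A, a = b) → (∀ a ∈ B, ∀ b ∈ B, a = b) →
      (A.Nonempty ↔ B.Nonempty) → A.card = B.card := by
    intro A B hA hB hAB
    rcases A.eq_empty_or_nonempty with h | h
    · rcases B.eq_empty_or_nonempty with h' | h'
      · simp [h, h']
      · exact absurd (hAB.mpr h') (by simp [h, Finset.not_nonempty_empty])
    · have h' := hAB.mp h
      obtain ⟨a, ha⟩ := h; obtain ⟨b, hb⟩ := h'
      have e1 : A = {a} := Finset.eq_singleton_iff_unique_mem.mpr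
        ⟨ha, fun x hx => hA x hx a ha⟩
      have e2 : B = {b} := Finset.eq_singleton_iff_unique_mem.mpr
        ⟨hb, fun x hx => hB x hx b hb⟩
      simp [e1, e2]
  have key : ∀ (c : (Fin 3 → Fin v) → Prop) (_ : DecidablePred c),
      ((Finset.univ.filter fun x : Fin 3 → Fin v => c x ∧ (x 0, x 1, x 2) ∈ P)).card
        = ((Finset.univ.filter fun x : Fin 3 → Fin v => c x ∧ (x 0, x 1, x 2) ∈ Q)).card →
      ∑ x : Fin 3 → Fin v, (if c x then (1:ℝ) else 0) * T x = 0 := by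
    intro c _ hcard
    have hpt : ∀ x : Fin 3 → Fin v, (if c x then (1:ℝ) else 0) * T x
        = (if c x ∧ (x 0, x 1, x 2) ∈ P then (1:ℝ) else 0)
          - (if c x ∧ (x 0, x 1, x 2) ∈ Q then (1:ℝ) else 0) := by
      intro x
      rw [hT]
      by_cases h2 : (x 0, x 1, x 2) ∈ P
      · have h3 : (x 0, x 1, x 2) ∉ Q := fun h => hdisjPQ x h2 h
        by_cases h1 : c x <;> simp [h1, h2, h3]
      · by_cases h1 : c x <;> by_cases h3 : (x 0, x 1, x 2) ∈ Q <;>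
          simp [h1, h2, h3]
    rw [Finset.sum_congr rfl (fun x _ => hpt x), Finset.sum_sub_distrib,
      Finset.sum_boole, Finset.sum_boole, hcard, sub_self]
  funext r
  obtain ⟨⟨I, hI⟩, u⟩ := r
  have hIcases : ∀ J : Finset (Fin 3), J.card = 2 →
      J = {0, 1} ∨ J = {0, 2} ∨ J = {1, 2} := by decide
  have fe : ∀ x y : Fin 3 → Fin v, x 0 = y 0 → x 1 = y 1 → x 2 = y 2 → x = y := by
    intro x y h0 h1 h2; funext i; fin_cases i <;> assumption
  simp only [Matrix.mulVec, dotProduct, inclusionMatrix, Pi.zero_apply]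
  rcases hIcases I hI with hI' | hI' | hI' <;> subst hI'
  · simp only [Finset.mem_insert, Finset.mem_singleton, forall_eq_or_imp, forall_eq]
    refine key (fun x => x 0 = u 0 ∧ x 1 = u 1) (by infer_instance) ?_
    refine cardeq _ _ ?_ ?_ ?_
    · rintro a ha b hb
      simp only [Finset.mem_filter] at ha hb
      obtain ⟨-, ⟨ha0, ha1⟩, haP⟩ := ha
      obtain ⟨-, ⟨hb0, hb1⟩, hbP⟩ := hb
      rw [ha0, ha1] at haP; rw [hb0, hb1] at hbP
      exact fe a b (ha0.trans hb0.symm) (ha1.trans hb1.symm)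
        (hPcell _ _ _ _ haP hbP)
    · rintro a ha b hb
      simp only [Finset.mem_filter] at ha hb
      obtain ⟨-, ⟨ha0, ha1⟩, haP⟩ := ha
      obtain ⟨-, ⟨hb0, hb1⟩, hbP⟩ := hb
      rw [ha0, ha1] at haP; rw [hb0, hb1] at hbP
      exact fe a b (ha0.trans hb0.symm) (ha1.trans hb1.symm)
        (hQcell _ _ _ _ haP hbP)
    · constructor
      · rintro ⟨x, hx⟩
        simp only [Finset.mem_filter] at hx
        obtain ⟨-, ⟨h0, h1⟩, hP⟩ := hx
        rw [h0, h1] at hP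
        obtain ⟨s, hs⟩ := (hcells (u 0) (u 1)).mp ⟨x 2, hP⟩
        exact ⟨![u 0, u 1, s], by simp [hs]⟩
      · rintro ⟨x, hx⟩
        simp only [Finset.mem_filter] at hx
        obtain ⟨-, ⟨h0, h1⟩, hQ⟩ := hx
        rw [h0, h1] at hQ
        obtain ⟨s, hs⟩ := (hcells (u 0) (u 1)).mpr ⟨x 2, hQ⟩
        exact ⟨![u 0, u 1, s], by simp [hs]⟩
  · simp only [Finset.mem_insert, Finset.mem_singleton, forall_eq_or_imp, forall_eq]
    refine key (fun x => x 0 = u 0 ∧ x 2 = u 2) (by infer_instance) ?_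
    refine cardeq _ _ ?_ ?_ ?_
    · rintro a ha b hb
      simp only [Finset.mem_filter] at ha hb
      obtain ⟨-, ⟨ha0, ha2⟩, haP⟩ := ha
      obtain ⟨-, ⟨hb0, hb2⟩, hbP⟩ := hb
      rw [ha0, ha2] at haP; rw [hb0, hb2] at hbP
      exact fe a b (ha0.trans hb0.symm)
        (hProw _ _ _ _ haP hbP) (ha2.trans hb2.symm)
    · rintro a ha b hb
      simp only [Finset.mem_filter] at ha hb
      obtain ⟨-, ⟨ha0, ha2⟩, haP⟩ := ha
      obtain ⟨-, ⟨hb0, hb2⟩, hbP⟩ := hb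
      rw [ha0, ha2] at haP; rw [hb0, hb2] at hbP
      exact fe a b (ha0.trans hb0.symm)
        (hQrow _ _ _ _ haP hbP) (ha2.trans hb2.symm)
    · constructor
      · rintro ⟨x, hx⟩
        simp only [Finset.mem_filter] at hx
        obtain ⟨-, ⟨h0, h2⟩, hP⟩ := hx
        rw [h0, h2] at hP
        obtain ⟨cc, hs⟩ := (hrows (u 0) (u 2)).mp ⟨x 1, hP⟩
        exact ⟨![u 0, cc, u 2], by simp [hs]⟩
      · rintro ⟨x, hx⟩
        simp only [Finset.mem_filter] at hx
        obtain ⟨-, ⟨h0, h2⟩, hQ⟩ := hx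
        rw [h0, h2] at hQ
        obtain ⟨cc, hs⟩ := (hrows (u 0) (u 2)).mpr ⟨x 1, hQ⟩
        exact ⟨![u 0, cc, u 2], by simp [hs]⟩
  · simp only [Finset.mem_insert, Finset.mem_singleton, forall_eq_or_imp, forall_eq]
    refine key (fun x => x 1 = u 1 ∧ x 2 = u 2) (by infer_instance) ?_
    refine cardeq _ _ ?_ ?_ ?_
    · rintro a ha b hb
      simp only [Finset.mem_filter] at ha hb
      obtain ⟨-, ⟨ha1, ha2⟩, haP⟩ := ha
      obtain ⟨-, ⟨hb1, hb2⟩, hbP⟩ := hb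
      rw [ha1, ha2] at haP; rw [hb1, hb2] at hbP
      exact fe a b (hPcol _ _ _ _ haP hbP)
        (ha1.trans hb1.symm) (ha2.trans hb2.symm)
    · rintro a ha b hb
      simp only [Finset.mem_filter] at ha hb
      obtain ⟨-, ⟨ha1, ha2⟩, haP⟩ := ha
      obtain ⟨-, ⟨hb1, hb2⟩, hbP⟩ := hb
      rw [ha1, ha2] at haP; rw [hb1, hb2] at hbP
      exact fe a b (hQcol _ _ _ _ haP hbP)
        (ha1.trans hb1.symm) (ha2.trans hb2.symm)
    · constructor
      · rintro ⟨x, hx⟩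
        simp only [Finset.mem_filter] at hx
        obtain ⟨-, ⟨h1, h2⟩, hP⟩ := hx
        rw [h1, h2] at hP
        obtain ⟨rr, hs⟩ := (hcols (u 1) (u 2)).mp ⟨x 0, hP⟩
        exact ⟨![rr, u 1, u 2], by simp [hs]⟩
      · rintro ⟨x, hx⟩
        simp only [Finset.mem_filter] at hx
        obtain ⟨-, ⟨h1, h2⟩, hQ⟩ := hx
        rw [h1, h2] at hQ
        obtain ⟨rr, hs⟩ := (hcols (u 1) (u 2)).mpr ⟨x 0, hQ⟩
        exact ⟨![rr, u 1, u 2], by simp [hs]⟩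
end

section
/- Let v ≥ 2 and let (P,Q) be a Latin trade of order v with signed frequency vector T ∈ ℝ^(V³) (T(i,j,s) = 1 if (i,j,s) ∈ P, −1 if (i,j,s) ∈ Q, 0 otherwise). Then T is a real linear combination of the intercalate vectors T_{ijk}, 1 ≤ i,j,k ≤ v−1, where T_{ijk}(a,b,c) = (δ_{a,0} − δ_{a,i})·(δ_{b,0} − δ_{b,j})·(δ_{c,0} − δ_{c,k}). -/
lemma card_eq_of_aux {α : Type*} (A B : Finset α) (hA : A.card ≤ 1) (hB : B.card ≤ 1)
    (h : A.Nonempty ↔ B.Nonempty) : A.card = B.card := by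
  rw [← Finset.card_pos, ← Finset.card_pos] at h
  omega

lemma oneD_aux {v : ℕ} (g : Fin v → ℝ) (hg : ∑ a, g a = 0) (a : Fin v) :
    g a = ∑ k ∈ Finset.univ.filter (fun k : Fin v => (k : ℕ) ≠ 0),
      (-g k) * (kdel0 a - kdel a k) := by
  by_cases ha : (a : ℕ) = 0
  · have hfe : Finset.univ.filter (fun k : Fin v => (k : ℕ) ≠ 0)
        = Finset.univ.erase a := by
      ext k
      simp only [Finset.mem_filter, Finset.mem_univ, true_and, Finset.mem_erase, and_true]
      constructor
      · intro hk hka; exact hk (hka ▸ ha)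
      · intro hk hk0; exact hk (Fin.ext (hk0.trans ha.symm))
    have hsum : ∀ k ∈ Finset.univ.erase a, (-g k) * (kdel0 a - kdel a k) = -g k := by
      intro k hk
      have hka : ¬ a = k := fun h => (Finset.mem_erase.mp hk).1 h.symm
      simp [kdel0, kdel, ha, hka]
    rw [hfe, Finset.sum_congr rfl hsum]
    have := Finset.add_sum_erase Finset.univ g (Finset.mem_univ a)
    rw [hg] at this
    have h2 : ∑ x ∈ Finset.univ.erase a, -g x = - ∑ x ∈ Finset.univ.erase a, g x := by
      simp
    rw [h2]; linarith
  · have hsum : ∀ k ∈ Finset.univ.filter (fun k : Fin v => (k : ℕ) ≠ 0),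
        (-g k) * (kdel0 a - kdel a k) = if a = k then g k else 0 := by
      intro k hk
      simp only [kdel0, kdel, if_neg ha]
      split_ifs <;> ring
    rw [Finset.sum_congr rfl hsum, Finset.sum_ite_eq]
    simp [ha]

lemma threeD_aux {v : ℕ} (F : Fin v → Fin v → Fin v → ℝ)
    (h1 : ∀ b c, ∑ a, F a b c = 0)
    (h2 : ∀ a c, ∑ b, F a b c = 0)
    (h3 : ∀ a b, ∑ c, F a b c = 0)
    (a b c : Fin v) :
    F a b c = ∑ i ∈ Finset.univ.filter (fun i : Fin v => (i : ℕ) ≠ 0),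
      ∑ j ∈ Finset.univ.filter (fun j : Fin v => (j : ℕ) ≠ 0),
      ∑ k ∈ Finset.univ.filter (fun k : Fin v => (k : ℕ) ≠ 0),
      (-F i j k) * ((kdel0 a - kdel a i) * (kdel0 b - kdel b j) * (kdel0 c - kdel c k)) := by
  rw [oneD_aux (fun r => F r b c) (h1 b c) a]
  refine Finset.sum_congr rfl fun i _ => ?_
  rw [show F i b c = _ from oneD_aux (fun s => F i s c) (h2 i c) b]
  rw [neg_mul, Finset.sum_mul, ← neg_one_mul, Finset.mul_sum]
  refine Finset.sum_congr rfl fun j _ => ?_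
  rw [show F i j c = _ from oneD_aux (fun k => F i j k) (h3 i j) c]
  rw [neg_one_mul, ← Finset.sum_neg_distrib, Finset.sum_mul, Finset.sum_mul,
    ← Finset.sum_neg_distrib]
  refine Finset.sum_congr rfl fun k _ => ?_
  ring

lemma linesum_aux {v : ℕ} (p q : Fin v → Prop) [DecidablePred p] [DecidablePred q]
    (hpq : ∀ x, ¬(p x ∧ q x))
    (hp1 : ∀ x y, p x → p y → x = y) (hq1 : ∀ x y, q x → q y → x = y)
    (hiff : (∃ x, p x) ↔ (∃ x, q x)) :
    ∑ x : Fin v, (if p x then (1:ℝ) else if q x then -1 else 0) = 0 := by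
  have hsplit : ∀ x : Fin v, (if p x then (1:ℝ) else if q x then -1 else 0)
      = (if p x then (1:ℝ) else 0) - (if q x then (1:ℝ) else 0) := by
    intro x
    by_cases hx : p x
    · have hqx : ¬ q x := fun h => hpq x ⟨hx, h⟩
      simp [hx, hqx]
    · by_cases hx2 : q x <;> simp [hx, hx2]
  rw [Finset.sum_congr rfl fun x _ => hsplit x, Finset.sum_sub_distrib,
    Finset.sum_boole, Finset.sum_boole]
  have hcard : (Finset.univ.filter p).card = (Finset.univ.filter q).card := by
    refine card_eq_of_aux _ _ ?_ ?_ ?_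
    · exact Finset.card_le_one.mpr fun x hx y hy =>
        hp1 x y (Finset.mem_filter.mp hx).2 (Finset.mem_filter.mp hy).2
    · exact Finset.card_le_one.mpr fun x hx y hy =>
        hq1 x y (Finset.mem_filter.mp hx).2 (Finset.mem_filter.mp hy).2
    · rw [Finset.filter_nonempty_iff, Finset.filter_nonempty_iff]
      simp only [Finset.mem_univ, true_and]
      exact hiff
  rw [hcard, sub_self]

theorem latinTrade_mem_span_intercalates (v : ℕ) (hv : 2 ≤ v)
    (P Q : Finset (Fin v × Fin v × Fin v))
    -- (1) same set of occupied cells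
    (hcells : ∀ i j : Fin v, (∃ s, (i, j, s) ∈ P) ↔ (∃ s, (i, j, s) ∈ Q))
    -- (1) at most one symbol per cell
    (hPcell : ∀ i j s s', (i, j, s) ∈ P → (i, j, s') ∈ P → s = s')
    (hQcell : ∀ i j s s', (i, j, s) ∈ Q → (i, j, s') ∈ Q → s = s')
    -- (2) the symbols of `P` and `Q` differ at every occupied cell
    (hdisj : ∀ i j s s', (i, j, s) ∈ P → (i, j, s') ∈ Q → s ≠ s')
    -- (3) each row of `P` and of `Q` contains the same set of symbols,
    -- each at most once
    (hrows : ∀ r s : Fin v, (∃ c, (r, c, s) ∈ P) ↔ (∃ c, (r, c, s) ∈ Q))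
    (hProw : ∀ r c c' s, (r, c, s) ∈ P → (r, c', s) ∈ P → c = c')
    (hQrow : ∀ r c c' s, (r, c, s) ∈ Q → (r, c', s) ∈ Q → c = c')
    -- (4) each column of `P` and of `Q` contains the same set of symbols,
    -- each at most once
    (hcols : ∀ c s : Fin v, (∃ r, (r, c, s) ∈ P) ↔ (∃ r, (r, c, s) ∈ Q))
    (hPcol : ∀ r r' c s, (r, c, s) ∈ P → (r', c, s) ∈ P → r = r')
    (hQcol : ∀ r r' c s, (r, c, s) ∈ Q → (r', c, s) ∈ Q → r = r')
    -- the signed frequency vector of the trade `(P,Q)`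
    (T : (Fin 3 → Fin v) → ℝ)
    (hT : ∀ x : Fin 3 → Fin v,
      T x = if (x 0, x 1, x 2) ∈ P then 1
            else if (x 0, x 1, x 2) ∈ Q then -1 else 0) :
    T ∈ Submodule.span ℝ
        (Set.range
          (fun p : {i : Fin v // (i : ℕ) ≠ 0} × {j : Fin v // (j : ℕ) ≠ 0} ×
              {k : Fin v // (k : ℕ) ≠ 0} =>
            interT p.1.1 p.2.1.1 p.2.2.1)) := by
  set F : Fin v → Fin v → Fin v → ℝ :=
    fun a b c => if (a, b, c) ∈ P then 1 else if (a, b, c) ∈ Q then -1 else 0 with hF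
  have h1 : ∀ b c, ∑ a, F a b c = 0 := fun b c =>
    linesum_aux (fun a => (a, b, c) ∈ P) (fun a => (a, b, c) ∈ Q)
      (fun a h => hdisj a b c c h.1 h.2 rfl)
      (fun x y hx hy => hPcol x y b c hx hy) (fun x y hx hy => hQcol x y b c hx hy)
      (hcols b c)
  have h2 : ∀ a c, ∑ b, F a b c = 0 := fun a c =>
    linesum_aux (fun b => (a, b, c) ∈ P) (fun b => (a, b, c) ∈ Q)
      (fun b h => hdisj a b c c h.1 h.2 rfl)
      (fun x y hx hy => hProw a x y c hx hy) (fun x y hx hy => hQrow a x y c hx hy)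
      (hrows a c)
  have h3 : ∀ a b, ∑ c, F a b c = 0 := fun a b =>
    linesum_aux (fun c => (a, b, c) ∈ P) (fun c => (a, b, c) ∈ Q)
      (fun c h => hdisj a b c c h.1 h.2 rfl)
      (fun x y hx hy => hPcell a b x y hx hy) (fun x y hx hy => hQcell a b x y hx hy)
      (hcells a b)
  have key : T = ∑ i ∈ Finset.univ.filter (fun i : Fin v => (i : ℕ) ≠ 0),
      ∑ j ∈ Finset.univ.filter (fun j : Fin v => (j : ℕ) ≠ 0),
      ∑ k ∈ Finset.univ.filter (fun k : Fin v => (k : ℕ) ≠ 0),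
      (-F i j k) • interT i j k := by
    funext x
    simp only [Finset.sum_apply, Pi.smul_apply, smul_eq_mul, interT]
    rw [hT x]
    exact threeD_aux F h1 h2 h3 (x 0) (x 1) (x 2)
  rw [key]
  refine Submodule.sum_mem _ fun i hi => Submodule.sum_mem _ fun j hj =>
    Submodule.sum_mem _ fun k hk => Submodule.smul_mem _ _ (Submodule.subset_span ?_)
  exact ⟨⟨⟨i, (Finset.mem_filter.mp hi).2⟩, ⟨j, (Finset.mem_filter.mp hj).2⟩,
    ⟨k, (Finset.mem_filter.mp hk).2⟩⟩, rfl⟩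
end

section
/- Let t ≥ 1, v ≥ 2, and for each l ∈ {1,…,t+1} let i_l, j_l ∈ V with i_l ≠ j_l. Define the vector T ∈ ℝ^(V^(t+1)) by T(y_1,…,y_{t+1}) = ∏_{l=1}^{t+1} (δ_{y_l, i_l} − δ_{y_l, j_l}). Then M_t(v,t+1) · T = 0, i.e., T lies in the null space of the t-inclusion matrix M_t(v,t+1). -/
theorem general_intercalate_mem_nullspace (t v : ℕ) (ht : 1 ≤ t) (hv : 2 ≤ v)
    (i j : Fin (t + 1) → Fin v) (hij : ∀ l, i l ≠ j l)
    (T : (Fin (t + 1) → Fin v) → ℝ)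
    (hT : ∀ y : Fin (t + 1) → Fin v,
      T y = ∏ l : Fin (t + 1), (kdel (y l) (i l) - kdel (y l) (j l))) :
    (inclusionMatrix v (t + 1) t).mulVec T = 0 := by
  funext r
  obtain ⟨⟨I, hI⟩, u⟩ := r
  have hcompl : Iᶜ.card = 1 := by
    simp [Finset.card_compl, hI]
  obtain ⟨m, hm⟩ := Finset.card_eq_one.mp hcompl
  have hmI : m ∉ I := by
    have : m ∈ Iᶜ := hm ▸ Finset.mem_singleton_self m
    exact Finset.mem_compl.mp this
  have hmem : ∀ l : Fin (t + 1), l ≠ m → l ∈ I := by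
    intro l hl
    by_contra h
    have : l ∈ Iᶜ := Finset.mem_compl.mpr h
    rw [hm] at this
    exact hl (Finset.mem_singleton.mp this)
  show ∑ x, inclusionMatrix v (t + 1) t (⟨⟨I, hI⟩, u⟩) x * T x = 0
  set F : (Fin (t + 1) → Fin v) → ℝ :=
    fun x => inclusionMatrix v (t + 1) t (⟨⟨I, hI⟩, u⟩) x * T x with hF
  have hinj : Function.Injective (fun a : Fin v => Function.update u m a) := by
    intro a b hab
    have := congrFun hab m
    simpa using this
  have hstep : ∑ x, F x =
      ∑ x ∈ Finset.univ.image (fun a : Fin v => Function.update u m a), F x := by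
    refine (Finset.sum_subset (Finset.subset_univ _) ?_).symm
    intro x _ hx
    have hnot : ¬ ∀ l ∈ I, x l = u l := by
      intro hagree
      apply hx
      refine Finset.mem_image.mpr ⟨x m, Finset.mem_univ _, ?_⟩
      funext l
      by_cases hlm : l = m
      · subst hlm; simp
      · rw [Function.update_of_ne hlm]
        exact (hagree l (hmem l hlm)).symm
    simp [hF, inclusionMatrix, hnot]
  rw [hstep, Finset.sum_image (fun a _ b _ h => hinj h)]
  have hval : ∀ a : Fin v, F (Function.update u m a) =
      (kdel a (i m) - kdel a (j m)) *
        ∏ l ∈ Finset.univ.erase m,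
          (kdel (u l) (i l) - kdel (u l) (j l)) := by
    intro a
    have hind : inclusionMatrix v (t + 1) t (⟨⟨I, hI⟩, u⟩)
        (Function.update u m a) = 1 := by
      have h : ∀ l ∈ I, Function.update u m a l = u l := fun l hl =>
        Function.update_of_ne (by rintro rfl; exact hmI hl) _ _
      simp only [inclusionMatrix]
      exact if_pos h
    rw [hF]
    simp only [hind, one_mul, hT]
    rw [← Finset.mul_prod_erase Finset.univ _ (Finset.mem_univ m)]
    congr 1
    · simp
    · refine Finset.prod_congr rfl fun l hl => ?_
      rw [Function.update_of_ne (Finset.ne_of_mem_erase hl)]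
  simp only [hval, ← Finset.sum_mul]
  have hsum : ∑ a : Fin v, (kdel a (i m) - kdel a (j m)) = 0 := by
    rw [Finset.sum_sub_distrib]
    simp [kdel]
  rw [hsum, zero_mul]
end

section
/- Let t ≥ 1 and v ≥ 2. The family of (v−1)^(t+1) vectors {T_{(i_1,…,i_{t+1})} : 1 ≤ i_1,…,i_{t+1} ≤ v−1}, where T_{(i_1,…,i_{t+1})}(y_1,…,y_{t+1}) = ∏_{l=1}^{t+1} (δ_{y_l, 0} − δ_{y_l, i_l}), forms a basis over ℝ of the null space of the t-inclusion matrix M_t(v,t+1). -/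
/-- The generalized intercalate vector `T_{(i_1,…,i_{t+1})}`, indexed by
`(t+1)`-tuples `y` over `Fin v`:
`T_{(i_1,…,i_{t+1})}(y_1,…,y_{t+1}) = ∏_l (δ_{y_l,0} − δ_{y_l,i_l})`. -/
def interTgen {t v : ℕ} (f : Fin (t + 1) → {i : Fin v // (i : ℕ) ≠ 0}) :
    (Fin (t + 1) → Fin v) → ℝ :=
  fun y => ∏ l : Fin (t + 1), (kdel0 (y l) - kdel (y l) (f l).1)

section Aux

variable {k v : ℕ}

/-- Merge a value at coordinate `j` with values elsewhere. -/
def mrg (j : Fin k) (a : Fin v) (w : {i : Fin k // i ≠ j} → Fin v) : Fin k → Fin v :=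
  fun l => if h : l = j then a else w ⟨l, h⟩

lemma mrg_same (j : Fin k) (a : Fin v) (w : {i : Fin k // i ≠ j} → Fin v) :
    mrg j a w j = a := by simp [mrg]

lemma mrg_ne (j : Fin k) (a : Fin v) (w : {i : Fin k // i ≠ j} → Fin v)
    {l : Fin k} (h : l ≠ j) : mrg j a w l = w ⟨l, h⟩ := by simp [mrg, h]

/-- Splitting a tuple at coordinate `j`. -/
def splitEquiv (j : Fin k) :
    (Fin k → Fin v) ≃ (({i : Fin k // i ≠ j} → Fin v) × Fin v) where
  toFun x := (fun i => x i.1, x j)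
  invFun p := mrg j p.2 p.1
  left_inv x := by
    funext l
    by_cases h : l = j
    · subst h; simp [mrg]
    · simp [mrg, h]
  right_inv p := by
    obtain ⟨w, a⟩ := p
    refine Prod.ext ?_ ?_
    · funext i; exact mrg_ne _ _ _ i.2
    · exact mrg_same _ _ _

lemma sum_mrg (j : Fin k) (h : (Fin k → Fin v) → ℝ) :
    ∑ x, h x = ∑ w, ∑ a, h (mrg j a w) := by
  rw [← Equiv.sum_comp (splitEquiv (v := v) j).symm h, Fintype.sum_prod_type]
  rfl

/-- The triangular basis vectors: `bfun 0 = δ_0` and `bfun a = δ_0 - δ_a` for `a ≠ 0`,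
viewed as functions; also serves as the change-of-basis coefficients. -/
def bfun (a : Fin v) : Fin v → ℝ :=
  fun i => kdel0 i - if (a : ℕ) = 0 then 0 else kdel i a

lemma fval0 [NeZero v] (a : Fin v) : (a : ℕ) = 0 ↔ a = 0 := by
  rw [Fin.ext_iff, Fin.val_zero]

lemma sum_kdel0 [NeZero v] : ∑ a : Fin v, kdel0 a = 1 := by
  simp [kdel0, fval0, Finset.sum_ite_eq']

lemma sum_kdel (i : Fin v) : ∑ a : Fin v, kdel a i = 1 := by
  simp [kdel, Finset.sum_ite_eq']

lemma sum_dual [NeZero v] (a y : Fin v) :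
    ∑ i : Fin v, bfun a i * bfun i y = if y = a then 1 else 0 := by
  by_cases ha : (a : ℕ) = 0
  · have ha0 : a = 0 := by rwa [fval0] at ha
    subst ha0
    have h1 : ∀ i : Fin v, bfun (0 : Fin v) i = if i = 0 then 1 else 0 := by
      intro i; simp [bfun, kdel0, fval0]
    simp only [h1, ite_mul, one_mul, zero_mul, Finset.sum_ite_eq']
    simp [bfun, kdel0, fval0]
  · have h1 : ∀ i : Fin v, bfun a i
        = (if i = 0 then 1 else 0) - (if i = a then 1 else 0) := by
      intro i; simp [bfun, ha, kdel0, kdel, fval0]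
    calc ∑ i : Fin v, bfun a i * bfun i y
        = ∑ i : Fin v,
            ((if i = 0 then bfun i y else 0) - (if i = a then bfun i y else 0)) := by
          refine Finset.sum_congr rfl fun i _ => ?_
          rw [h1]
          split_ifs <;> ring
      _ = bfun 0 y - bfun a y := by
          rw [Finset.sum_sub_distrib, Finset.sum_ite_eq', Finset.sum_ite_eq']
          simp
      _ = if y = a then 1 else 0 := by
          simp only [bfun, ha, if_false]
          have : ((0 : Fin v) : ℕ) = 0 := rfl
          rw [if_pos this]
          simp [kdel]

lemma expand [NeZero v] (c : (Fin k → Fin v) → ℝ) (y : Fin k → Fin v) :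
    c y = ∑ f : Fin k → Fin v,
      (∑ x, c x * ∏ l, bfun (x l) (f l)) * ∏ l, bfun (f l) (y l) := by
  have key : ∀ x : Fin k → Fin v,
      (∑ f : Fin k → Fin v, (∏ l, bfun (x l) (f l)) * ∏ l, bfun (f l) (y l))
        = if y = x then 1 else 0 := by
    intro x
    have h1 : ∀ f : Fin k → Fin v,
        (∏ l, bfun (x l) (f l)) * ∏ l, bfun (f l) (y l)
          = ∏ l, (bfun (x l) (f l) * bfun (f l) (y l)) := by
      intro f; rw [Finset.prod_mul_distrib]
    simp only [h1]
    have hps := Finset.prod_univ_sum (fun _ : Fin k => (Finset.univ : Finset (Fin v)))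
      (fun l i => bfun (x l) i * bfun i (y l))
    rw [Fintype.piFinset_univ] at hps
    rw [← hps]
    have h2 : ∀ l : Fin k, (∑ i ∈ (Finset.univ : Finset (Fin v)), bfun (x l) i * bfun i (y l))
        = if y l = x l then 1 else 0 := fun l => sum_dual _ _
    rw [Finset.prod_congr rfl fun l _ => h2 l, Finset.prod_boole]
    congr 1
    simp [funext_iff]
  symm
  calc ∑ f : Fin k → Fin v,
        (∑ x, c x * ∏ l, bfun (x l) (f l)) * ∏ l, bfun (f l) (y l)
      = ∑ f : Fin k → Fin v, ∑ x, c x *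
          ((∏ l, bfun (x l) (f l)) * ∏ l, bfun (f l) (y l)) := by
        refine Finset.sum_congr rfl fun f _ => ?_
        rw [Finset.sum_mul]
        exact Finset.sum_congr rfl fun x _ => by ring
    _ = ∑ x, c x * ∑ f : Fin k → Fin v,
          ((∏ l, bfun (x l) (f l)) * ∏ l, bfun (f l) (y l)) := by
        rw [Finset.sum_comm]
        exact Finset.sum_congr rfl fun x _ => by rw [Finset.mul_sum]
    _ = ∑ x, c x * (if y = x then 1 else 0) := by
        exact Finset.sum_congr rfl fun x _ => by rw [key x]
    _ = c y := by simp [Finset.sum_ite_eq]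

lemma alpha_zero [NeZero v] (c : (Fin k → Fin v) → ℝ)
    (hker : ∀ (j : Fin k) (w : {i : Fin k // i ≠ j} → Fin v), ∑ a, c (mrg j a w) = 0)
    (f : Fin k → Fin v) (j : Fin k) (hj : (f j : ℕ) = 0) :
    ∑ x, c x * ∏ l, bfun (x l) (f l) = 0 := by
  rw [sum_mrg j]
  refine Finset.sum_eq_zero fun w _ => ?_
  have hprod : ∀ a : Fin v, (∏ l, bfun (mrg j a w l) (f l))
      = ∏ l ∈ Finset.univ.erase j, bfun (mrg j 0 w l) (f l) := by
    intro a
    rw [← Finset.mul_prod_erase Finset.univ _ (Finset.mem_univ j)]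
    have h1 : bfun (mrg j a w j) (f j) = 1 := by
      rw [mrg_same]
      simp only [bfun, kdel0, kdel, hj, if_true]
      by_cases hha : (a : ℕ) = 0
      · simp [hha]
      · have hne : f j ≠ a := by
          intro h; rw [h] at hj; exact hha hj
        simp [hha, hne]
    rw [h1, one_mul]
    refine Finset.prod_congr rfl fun l hl => ?_
    have hlj : l ≠ j := (Finset.mem_erase.mp hl).1
    rw [mrg_ne _ _ _ hlj, mrg_ne _ _ _ hlj]
  calc ∑ a, c (mrg j a w) * ∏ l, bfun (mrg j a w l) (f l)
      = (∑ a, c (mrg j a w)) *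
          ∏ l ∈ Finset.univ.erase j, bfun (mrg j 0 w l) (f l) := by
        rw [Finset.sum_mul]
        exact Finset.sum_congr rfl fun a _ => by rw [hprod]
    _ = 0 := by rw [hker j w, zero_mul]

lemma row_sum (j : Fin k) (u : Fin k → Fin v) (c : (Fin k → Fin v) → ℝ) :
    ∑ x, (if ∀ i ∈ Finset.univ.erase j, x i = u i then (1 : ℝ) else 0) * c x
      = ∑ a, c (mrg j a fun i => u i.1) := by
  classical
  rw [sum_mrg j]
  have hcond : ∀ (a : Fin v) (w : {i : Fin k // i ≠ j} → Fin v),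
      (∀ i ∈ Finset.univ.erase j, mrg j a w i = u i) ↔ w = fun i => u i.1 := by
    intro a w
    constructor
    · intro h
      funext i
      have := h i.1 (Finset.mem_erase.mpr ⟨i.2, Finset.mem_univ _⟩)
      rwa [mrg_ne _ _ _ i.2] at this
    · rintro rfl i hi
      exact mrg_ne _ _ _ (Finset.mem_erase.mp hi).1
  calc ∑ w, ∑ a,
        (if ∀ i ∈ Finset.univ.erase j, mrg j a w i = u i then (1 : ℝ) else 0)
          * c (mrg j a w)
      = ∑ w, if w = (fun i => u i.1) then ∑ a, c (mrg j a w) else 0 := by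
        refine Finset.sum_congr rfl fun w _ => ?_
        by_cases hw : w = fun i => u i.1
        · rw [if_pos hw]
          refine Finset.sum_congr rfl fun a _ => ?_
          rw [if_pos ((hcond a w).mpr hw), one_mul]
        · rw [if_neg hw]
          refine Finset.sum_eq_zero fun a _ => ?_
          rw [if_neg (fun h => hw ((hcond a w).mp h)), zero_mul]
    _ = ∑ a, c (mrg j a fun i => u i.1) := by
        rw [Finset.sum_ite_eq' Finset.univ (fun i => u i.1)
          (fun w => ∑ a, c (mrg j a w))]
        simp

lemma mem_ker_iff {t : ℕ} [NeZero v] (c : (Fin (t + 1) → Fin v) → ℝ) :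
    (inclusionMatrix v (t + 1) t).mulVecLin c = 0 ↔
      ∀ (j : Fin (t + 1)) (w : {i : Fin (t + 1) // i ≠ j} → Fin v),
        ∑ a, c (mrg j a w) = 0 := by
  constructor
  · intro h j w
    have hcard : (Finset.univ.erase j).card = t := by
      rw [Finset.card_erase_of_mem (Finset.mem_univ _), Finset.card_univ,
        Fintype.card_fin]
      omega
    have h0 := congrFun h (⟨⟨Finset.univ.erase j, hcard⟩, mrg j 0 w⟩)
    simp only [Matrix.mulVecLin_apply, Matrix.mulVec, dotProduct,
      inclusionMatrix, Pi.zero_apply] at h0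
    rw [row_sum j (mrg j 0 w) c] at h0
    have hw : (fun i : {i : Fin (t + 1) // i ≠ j} => mrg j 0 w i.1) = w :=
      funext fun i => mrg_ne _ _ _ i.2
    rwa [hw] at h0
  · intro h
    funext r
    obtain ⟨⟨I, hI⟩, u⟩ := r
    have hex : ∃ j, j ∉ I := by
      by_contra hh
      push_neg at hh
      have : I = Finset.univ := Finset.eq_univ_iff_forall.mpr hh
      rw [this, Finset.card_univ, Fintype.card_fin] at hI
      omega
    obtain ⟨j, hj⟩ := hex
    have hIe : I = Finset.univ.erase j := by
      refine Finset.eq_of_subset_of_card_le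
        (fun i hi => Finset.mem_erase.mpr ⟨fun he => hj (he ▸ hi), Finset.mem_univ _⟩) ?_
      rw [Finset.card_erase_of_mem (Finset.mem_univ _), Finset.card_univ,
        Fintype.card_fin, hI]
      omega
    simp only [Matrix.mulVecLin_apply, Matrix.mulVec, dotProduct,
      inclusionMatrix, Pi.zero_apply, hIe]
    rw [row_sum j u c]
    exact h j _

end Aux

/-- The family `{T_{(i_1,…,i_{t+1})} : 1 ≤ i_1,…,i_{t+1} ≤ v−1}` is a basis
of the null space of `M_t(v,t+1)`: it is linearly independent and spans the
null space. -/
theorem general_intercalates_basis_nullspace (t v : ℕ) (ht : 1 ≤ t) (hv : 2 ≤ v) :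
    LinearIndependent ℝ
        (fun f : Fin (t + 1) → {i : Fin v // (i : ℕ) ≠ 0} => interTgen f) ∧
      Submodule.span ℝ
          (Set.range
            (fun f : Fin (t + 1) → {i : Fin v // (i : ℕ) ≠ 0} => interTgen f)) =
        LinearMap.ker (inclusionMatrix v (t + 1) t).mulVecLin := by
  haveI : NeZero v := ⟨by omega⟩
  constructor
  · -- linear independence
    rw [Fintype.linearIndependent_iff]
    intro g hg f₀
    have h0 := congrFun hg (fun l => ((f₀ l : Fin v)))
    simp only [Finset.sum_apply, Pi.smul_apply, smul_eq_mul, Pi.zero_apply] at h0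
    have hval : ∀ f : Fin (t + 1) → {i : Fin v // (i : ℕ) ≠ 0},
        interTgen f (fun l => ((f₀ l : Fin v)))
          = (-1 : ℝ) ^ (t + 1) * (if f = f₀ then 1 else 0) := by
      intro f
      unfold interTgen
      have hfac : ∀ l : Fin (t + 1),
          kdel0 ((f₀ l : Fin v)) - kdel ((f₀ l : Fin v)) ((f l : Fin v))
            = (-1) * (if f l = f₀ l then 1 else 0) := by
        intro l
        have h1 : kdel0 ((f₀ l : Fin v)) = 0 := by simp [kdel0, (f₀ l).2]
        have h2 : kdel ((f₀ l : Fin v)) ((f l : Fin v))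
            = if f l = f₀ l then 1 else 0 := by
          simp only [kdel, Subtype.ext_iff]
          by_cases h : (f l : Fin v) = (f₀ l : Fin v)
          · rw [if_pos h.symm, if_pos h]
          · rw [if_neg (fun hh => h hh.symm), if_neg h]
        rw [h1, h2]; ring
      rw [Finset.prod_congr rfl fun l _ => hfac l, Finset.prod_mul_distrib,
        Finset.prod_const, Finset.prod_boole]
      simp only [Finset.card_univ, Fintype.card_fin, Finset.mem_univ,
        forall_true_left]
      congr 1
      congr 1
      simp [funext_iff]
    have hsum : ∀ f : Fin (t + 1) → {i : Fin v // (i : ℕ) ≠ 0},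
        g f * ((-1 : ℝ) ^ (t + 1) * (if f = f₀ then 1 else 0))
          = if f = f₀ then (-1 : ℝ) ^ (t + 1) * g f else 0 := by
      intro f
      by_cases h : f = f₀ <;> simp [h] <;> ring
    rw [Finset.sum_congr rfl fun f _ => by rw [hval f, hsum f]] at h0
    rw [Finset.sum_ite_eq' Finset.univ f₀] at h0
    simp only [Finset.mem_univ, if_true] at h0
    have hne : ((-1 : ℝ)) ^ (t + 1) ≠ 0 := pow_ne_zero _ (by norm_num)
    exact (mul_eq_zero.mp h0).resolve_left hne
  · apply le_antisymm
    · -- span ≤ ker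
      rw [Submodule.span_le]
      rintro _ ⟨f, rfl⟩
      rw [SetLike.mem_coe, LinearMap.mem_ker, mem_ker_iff]
      intro j w
      have hsplit : ∀ a : Fin v, interTgen f (mrg j a w)
          = (kdel0 a - kdel a (f j).1) *
              ∏ l ∈ Finset.univ.erase j,
                (kdel0 (mrg j 0 w l) - kdel (mrg j 0 w l) (f l).1) := by
        intro a
        unfold interTgen
        rw [← Finset.mul_prod_erase Finset.univ _ (Finset.mem_univ j), mrg_same]
        congr 1
        refine Finset.prod_congr rfl fun l hl => ?_
        have hlj : l ≠ j := (Finset.mem_erase.mp hl).1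
        rw [mrg_ne _ _ _ hlj, mrg_ne _ _ _ hlj]
      rw [Finset.sum_congr rfl fun a _ => hsplit a, ← Finset.sum_mul]
      have hz : ∑ a : Fin v, (kdel0 a - kdel a (f j).1) = 0 := by
        rw [Finset.sum_sub_distrib, sum_kdel0, sum_kdel, sub_self]
      rw [hz, zero_mul]
    · -- ker ≤ span
      intro c hc
      rw [LinearMap.mem_ker, mem_ker_iff] at hc
      have hrep : c = ∑ f' : Fin (t + 1) → {i : Fin v // (i : ℕ) ≠ 0},
          (∑ x, c x * ∏ l, bfun (x l) ((f' l : Fin v))) • interTgen f' := by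
        funext y
        rw [expand c y, Finset.sum_apply]
        set e : (Fin (t + 1) → {i : Fin v // (i : ℕ) ≠ 0}) → (Fin (t + 1) → Fin v) :=
          fun f' l => (f' l : Fin v) with he
        have he_inj : Function.Injective e := by
          intro f₁ f₂ h
          funext l
          exact Subtype.ext (congrFun h l)
        have hstep1 : ∑ f : Fin (t + 1) → Fin v,
            (∑ x, c x * ∏ l, bfun (x l) (f l)) * ∏ l, bfun (f l) (y l)
              = ∑ f ∈ Finset.univ.image e,
                (∑ x, c x * ∏ l, bfun (x l) (f l)) * ∏ l, bfun (f l) (y l) := by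
          refine (Finset.sum_subset (Finset.subset_univ _) fun f _ hf => ?_).symm
          have : ∃ j, (f j : ℕ) = 0 := by
            by_contra hcon
            push_neg at hcon
            exact hf (Finset.mem_image.mpr
              ⟨fun l => ⟨f l, hcon l⟩, Finset.mem_univ _, rfl⟩)
          obtain ⟨j, hj⟩ := this
          rw [alpha_zero c hc f j hj, zero_mul]
        have hstep2 : ∑ f ∈ Finset.univ.image e,
            (∑ x, c x * ∏ l, bfun (x l) (f l)) * ∏ l, bfun (f l) (y l)
              = ∑ f' : Fin (t + 1) → {i : Fin v // (i : ℕ) ≠ 0},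
                (∑ x, c x * ∏ l, bfun (x l) (e f' l)) * ∏ l, bfun (e f' l) (y l) := by
          rw [Finset.sum_image (fun a _ b _ hab => he_inj hab)]
        rw [hstep1, hstep2]
        refine Finset.sum_congr rfl fun f' _ => ?_
        have hB : (∏ l, bfun (e f' l) (y l)) = interTgen f' y := by
          refine Finset.prod_congr rfl fun l _ => ?_
          simp [he, bfun, (f' l).2]
        rw [hB]
        rfl
      rw [hrep]
      exact Submodule.sum_mem _ fun f' _ =>
        Submodule.smul_mem _ _ (Submodule.subset_span ⟨f', rfl⟩)
end
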